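/- arXiv:cs/0507034 — 8 statements merged into one kernel-verified Lean document; each statement's English description precedes it below -/
import Mathlib

section
/- In the network B_clockwise(κ,m), for every source node s and every target node t, every greedy route with respect to the distance function δ_clockwise from s reaches t in at most 3m−2 hops. -/
/-- The clockwise distance `(v - u) mod n` between two nodes on a ring of `n` nodes. -/
def clockDelta (n : ℕ) (u v : Fin n) : ℕ := ((v : ℕ) + n - (u : ℕ)) % n

/-- The level `ℓ(u) = (m-1) - (u mod m)` of a node. -/
def clockLevel (m : ℕ) {n : ℕ} (u : Fin n) : ℕ := (m - 1) - ((u : ℕ) % m)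

/-- The directed edges of the Papillon network `B_clockwise(κ, m)` on `n = κ^m * m` nodes:
`u` links to `(u + x) mod n` for `x ∈ {1 + i·m·κ^{ℓ(u)} : 0 ≤ i < κ}`. -/
def clockEdge (κ m : ℕ) (u v : Fin (κ ^ m * m)) : Prop :=
  ∃ i < κ, (v : ℕ) = ((u : ℕ) + (1 + i * m * κ ^ clockLevel m u)) % (κ ^ m * m)

/-- `v` is a greedy next hop from `u` towards target `t` with respect to `δ_clockwise`:
`v` is a neighbor of `u` minimizing the clockwise distance to `t` among `u`'s neighbors. -/
def clockGreedyStep (κ m : ℕ) (t u v : Fin (κ ^ m * m)) : Prop :=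
  clockEdge κ m u v ∧ ∀ v', clockEdge κ m u v' →
    clockDelta (κ ^ m * m) v t ≤ clockDelta (κ ^ m * m) v' t

private lemma delta_cases (n u t : ℕ) (hn : 0 < n) (hu : u < n) (ht : t < n) :
    (t + n - u) % n = if u ≤ t then t - u else t + n - u := by
  split
  · next h =>
      rw [show t + n - u = (t - u) + n by omega, Nat.add_mod_right,
        Nat.mod_eq_of_lt (by omega)]
  · exact Nat.mod_eq_of_lt (by omega)

private lemma delta_sub (n u t x : ℕ) (hn : 0 < n) (hu : u < n) (ht : t < n)
    (hx : x ≤ (t + n - u) % n) :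
    (t + n - (u + x) % n) % n = (t + n - u) % n - x := by
  rw [delta_cases n u t hn hu ht] at hx ⊢
  by_cases h : u ≤ t
  · rw [if_pos h] at hx ⊢
    rw [Nat.mod_eq_of_lt (show u + x < n by omega),
      delta_cases n (u+x) t hn (by omega) ht, if_pos (by omega)]
    omega
  · rw [if_neg h] at hx ⊢
    by_cases h2 : u + x < n
    · rw [Nat.mod_eq_of_lt h2, delta_cases n (u+x) t hn h2 ht, if_neg (by omega)]
      omega
    · rw [show (u + x) % n = u + x - n by
        rw [Nat.mod_eq_sub_mod (by omega), Nat.mod_eq_of_lt (by omega)],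
        delta_cases n (u+x-n) t hn (by omega) ht]
      split <;> omega

private lemma delta_eq_zero (n u t : ℕ) (hn : 0 < n) (hu : u < n) (ht : t < n) :
    (t + n - u) % n = 0 ↔ u = t := by
  rw [delta_cases n u t hn hu ht]; split <;> omega

/-- In `B_clockwise(κ, m)`, every greedy route w.r.t. `δ_clockwise` from any source `s`
reaches any target `t` in at most `3m - 2` hops. -/
theorem clockwise_greedy_worst_case (κ m : ℕ) (hκ : 1 ≤ κ) (hm : 1 ≤ m)
    (s t : Fin (κ ^ m * m)) (w : ℕ → Fin (κ ^ m * m))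
    (h0 : w 0 = s)
    (hstep : ∀ j, w j ≠ t → clockGreedyStep κ m t (w j) (w (j + 1))) :
    ∃ L ≤ 3 * m - 2, w L = t := by
  by_contra hcon
  push_neg at hcon
  have hn : 0 < κ ^ m * m := Nat.mul_pos (Nat.pow_pos (by omega)) hm
  -- the distance to the target is zero iff we are at the target
  have hzero : ∀ j, w j ≠ t → 1 ≤ clockDelta (κ ^ m * m) (w j) t := by
    intro j hne
    rcases Nat.eq_zero_or_pos (clockDelta (κ ^ m * m) (w j) t) with h0' | h0'
    · exact absurd
        (Fin.ext ((delta_eq_zero (κ ^ m * m) (w j) (t : ℕ) hn (w j).isLt t.isLt).mp h0')) hne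
    · exact h0'
  -- the basic greedy step bound: any admissible jump bounds the next distance
  have step : ∀ j i ℓ, i < κ → w j ≠ t → clockLevel m (w j) = ℓ →
      1 + i * (m * κ ^ ℓ) ≤ clockDelta (κ ^ m * m) (w j) t →
      clockDelta (κ ^ m * m) (w (j+1)) t ≤
        clockDelta (κ ^ m * m) (w j) t - (1 + i * (m * κ ^ ℓ)) := by
    intro j i ℓ hi hne hℓ hx
    obtain ⟨-, hmin⟩ := hstep j hne
    have hvlt : ((w j : ℕ) + (1 + i * m * κ ^ clockLevel m (w j))) % (κ ^ m * m)
        < κ ^ m * m := Nat.mod_lt _ hn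
    have hmin' := hmin ⟨_, hvlt⟩ ⟨i, hi, rfl⟩
    have hxe : 1 + i * m * κ ^ clockLevel m (w j) = 1 + i * (m * κ ^ ℓ) := by
      rw [hℓ, Nat.mul_assoc]
    simp only [clockDelta] at hmin' hx ⊢
    rw [hxe] at hmin'
    have hds := delta_sub (κ ^ m * m) (w j : ℕ) (t : ℕ) (1 + i * (m * κ ^ ℓ)) hn
      (w j).isLt t.isLt hx
    calc clockDelta (κ ^ m * m) (w (j+1)) t
        ≤ _ := hmin'
      _ = _ := hds
  have hdvd : (m : ℕ) ∣ κ ^ m * m := Dvd.intro_left _ rfl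
  set r := (s : ℕ) % m with hr
  have hrm : r < m := Nat.mod_lt _ hm
  set a := (m - r) % m with hadef
  have ha : a < m := Nat.mod_lt _ hm
  have hra : (r + a) % m = 0 := by
    by_cases h : r = 0
    · have h2 : a = 0 := by rw [hadef, h, Nat.sub_zero, Nat.mod_self]
      rw [h2, h, Nat.add_zero, Nat.zero_mod]
    · have h2 : a = m - r := by rw [hadef]; exact Nat.mod_eq_of_lt (by omega)
      rw [h2, show r + (m - r) = m by omega, Nat.mod_self]
  -- residues along the walk
  have hmod : ∀ j, j ≤ a + 2*m - 1 → (w j : ℕ) % m = (r + j) % m := by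
    intro j
    induction j with
    | zero =>
        intro _
        rw [h0, Nat.add_zero, Nat.mod_eq_of_lt hrm]
    | succ j ih =>
        intro hj
        have hne : w j ≠ t := hcon j (by omega)
        obtain ⟨⟨i, hi, hv⟩, -⟩ := hstep j hne
        rw [hv, Nat.mod_mod_of_dvd _ hdvd,
          show (w j : ℕ) + (1 + i * m * κ ^ clockLevel m (w j))
            = ((w j : ℕ) + 1) + (i * κ ^ clockLevel m (w j)) * m by ring,
          Nat.add_mul_mod_self_right, ← Nat.mod_add_mod, ih (by omega), Nat.mod_add_mod,
          Nat.add_assoc]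
  -- descent phase: after a + k steps the distance is below m * κ^(m-k)
  have desc : ∀ k, k ≤ m → clockDelta (κ ^ m * m) (w (a + k)) t < m * κ ^ (m - k) := by
    intro k
    induction k with
    | zero =>
        intro _
        have h1 : clockDelta (κ ^ m * m) (w (a + 0)) t < κ ^ m * m :=
          Nat.mod_lt _ hn
        rw [show m * κ ^ (m - 0) = κ ^ m * m by rw [Nat.sub_zero]; ring]
        exact h1
    | succ k ih =>
        intro hk1
        have hk : k < m := by omega
        have hne : w (a + k) ≠ t := hcon _ (by omega)
        have hIH := ih (by omega)
        have humod : (w (a + k) : ℕ) % m = k := by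
          rw [hmod (a + k) (by omega), show r + (a + k) = (r + a) + k by omega,
            Nat.add_mod, hra, Nat.zero_add, Nat.mod_mod_of_dvd _ (dvd_refl m),
            Nat.mod_eq_of_lt hk]
        have hlev : clockLevel m (w (a + k)) = m - 1 - k := by
          rw [clockLevel, humod]
        have hp : 0 < m * κ ^ (m - 1 - k) := Nat.mul_pos hm (Nat.pow_pos (by omega))
        have hd1 : 1 ≤ clockDelta (κ ^ m * m) (w (a + k)) t := hzero _ hne
        have hpow : m * κ ^ (m - k) = (m * κ ^ (m - 1 - k)) * κ := by
          rw [show m - k = (m - 1 - k) + 1 by omega, pow_succ]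
          ring
        have hIH' : clockDelta (κ ^ m * m) (w (a + k)) t < (m * κ ^ (m - 1 - k)) * κ := by
          rw [← hpow]; exact hIH
        have hi : (clockDelta (κ ^ m * m) (w (a + k)) t - 1) / (m * κ ^ (m - 1 - k)) < κ := by
          rw [Nat.div_lt_iff_lt_mul hp, Nat.mul_comm κ (m * κ ^ (m - 1 - k))] at *
          omega
        have hle := Nat.div_mul_le_self (clockDelta (κ ^ m * m) (w (a + k)) t - 1)
          (m * κ ^ (m - 1 - k))
        have hxle : 1 + ((clockDelta (κ ^ m * m) (w (a + k)) t - 1) / (m * κ ^ (m - 1 - k)))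
            * (m * κ ^ (m - 1 - k)) ≤ clockDelta (κ ^ m * m) (w (a + k)) t := by
          omega
        have hstep' := step (a + k)
          ((clockDelta (κ ^ m * m) (w (a + k)) t - 1) / (m * κ ^ (m - 1 - k)))
          (m - 1 - k) hi hne hlev hxle
        have hmp := Nat.mod_add_div (clockDelta (κ ^ m * m) (w (a + k)) t - 1)
          (m * κ ^ (m - 1 - k))
        have hmlt := Nat.mod_lt (clockDelta (κ ^ m * m) (w (a + k)) t - 1) hp
        have hcomm : ((clockDelta (κ ^ m * m) (w (a + k)) t - 1) / (m * κ ^ (m - 1 - k)))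
            * (m * κ ^ (m - 1 - k))
            = (m * κ ^ (m - 1 - k)) *
              ((clockDelta (κ ^ m * m) (w (a + k)) t - 1) / (m * κ ^ (m - 1 - k))) :=
          Nat.mul_comm _ _
        rw [show a + (k + 1) = (a + k) + 1 by omega, show m - (k + 1) = m - 1 - k by omega]
        generalize hA : (clockDelta (κ ^ m * m) (w (a + k)) t - 1) % (m * κ ^ (m - 1 - k)) = A
          at hmp hmlt
        generalize hB : (m * κ ^ (m - 1 - k)) *
            ((clockDelta (κ ^ m * m) (w (a + k)) t - 1) / (m * κ ^ (m - 1 - k))) = B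
          at hmp hcomm
        generalize hC : ((clockDelta (κ ^ m * m) (w (a + k)) t - 1) / (m * κ ^ (m - 1 - k)))
            * (m * κ ^ (m - 1 - k)) = C
          at hstep' hcomm
        omega
  -- final phase: short links
  have final : ∀ k, k ≤ m - 1 →
      clockDelta (κ ^ m * m) (w (a + m + k)) t ≤ m - 1 - k := by
    intro k
    induction k with
    | zero =>
        intro _
        have := desc m le_rfl
        rw [Nat.sub_self, pow_zero, Nat.mul_one] at this
        simp only [Nat.add_zero, Nat.sub_zero]
        omega
    | succ k ih =>
        intro hk
        have hne : w (a + m + k) ≠ t := hcon _ (by omega)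
        have hIH := ih (by omega)
        have hd1 : 1 ≤ clockDelta (κ ^ m * m) (w (a + m + k)) t := hzero _ hne
        have hstep' := step (a + m + k) 0 (clockLevel m (w (a + m + k))) (by omega) hne rfl
          (by simpa using hd1)
        simp only [Nat.zero_mul, Nat.add_zero] at hstep'
        rw [show a + m + (k + 1) = (a + m + k) + 1 by omega]
        omega
  have hfin := final (m - 1) le_rfl
  rw [show a + m + (m - 1) = a + 2*m - 1 by omega] at hfin
  have hzero' : clockDelta (κ ^ m * m) (w (a + 2*m - 1)) t = 0 := by omega
  exact hcon (a + 2*m - 1) (by omega)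
    (Fin.ext ((delta_eq_zero (κ ^ m * m) _ _ hn (w _).isLt t.isLt).mp hzero'))
end

section
/- In the network B_clockwise(κ,m), the average over all ordered pairs (s,t) of nodes of the length of a greedy route with respect to δ_clockwise from s to t is less than 2m−1. -/
open Finset

private lemma modeq_eq_of_lt {m a b : ℕ} (h : a ≡ b [MOD m]) (ha : a < m) (hb : b < m) :
    a = b := by
  simpa [Nat.ModEq, Nat.mod_eq_of_lt ha, Nat.mod_eq_of_lt hb] using h

private lemma key_mod (m c a : ℕ) (hm : 0 < m) :
    ((a + c) % m + (m - c % m)) % m = a % m := by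
  have hd := Nat.div_add_mod c m
  have hr : c % m < m := Nat.mod_lt _ hm
  have h1 : ((a + c) % m + (m - c % m)) ≡ ((a + c) + (m - c % m)) [MOD m] :=
    (Nat.mod_modEq (a + c) m).add_right _
  have h2 : (a + c) + (m - c % m) = a + m * (c / m) + m := by omega
  calc ((a + c) % m + (m - c % m)) % m
      = ((a + c) + (m - c % m)) % m := h1
    _ = (a + m * (c / m) + m) % m := by rw [h2]
    _ = a % m := by rw [Nat.add_mod_right, Nat.add_mul_mod_self_left]

/-- Sum of `(x+c) % m` over a full period equals the Gauss sum. -/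
lemma sum_range_add_mod (m c : ℕ) (hm : 0 < m) :
    ∑ x ∈ range m, (x + c) % m = ∑ x ∈ range m, x := by
  refine Finset.sum_nbij' (fun x => (x + c) % m) (fun y => (y + (m - c % m)) % m)
    (fun a _ => mem_range.2 (Nat.mod_lt _ hm))
    (fun a _ => mem_range.2 (Nat.mod_lt _ hm)) ?_ ?_ (fun a _ => rfl)
  · intro a ha
    rw [mem_range] at ha
    show ((a + c) % m + (m - c % m)) % m = a
    rw [key_mod m c a hm, Nat.mod_eq_of_lt ha]
  · intro a ha
    rw [mem_range] at ha
    show ((a + (m - c % m)) % m + c) % m = a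
    have h1 : ((a + (m - c % m)) % m + c) ≡ (a + (m - c % m) + c) [MOD m] :=
      (Nat.mod_modEq (a + (m - c % m)) m).add_right _
    have hd := Nat.div_add_mod c m
    have hr : c % m < m := Nat.mod_lt _ hm
    have h2 : a + (m - c % m) + c = a + m * (c / m) + m := by omega
    calc ((a + (m - c % m)) % m + c) % m
        = (a + (m - c % m) + c) % m := h1
      _ = (a + m * (c / m) + m) % m := by rw [h2]
      _ = a := by rw [Nat.add_mod_right, Nat.add_mul_mod_self_left, Nat.mod_eq_of_lt ha]

/-- Decompose a sum over `range (q*k)` into blocks. -/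
lemma sum_range_mul_blocks (f : ℕ → ℕ) (q k : ℕ) :
    ∑ x ∈ range (q * k), f x = ∑ a ∈ range q, ∑ b ∈ range k, f (a * k + b) := by
  induction q with
  | zero => simp
  | succ q ih =>
      rw [Nat.succ_mul, Finset.sum_range_add, ih, Finset.sum_range_succ]

/-- Sum of a step indicator. -/
lemma sum_range_indicator (n K v : ℕ) (hK : K ≤ n) :
    ∑ x ∈ range n, (if x < K then 0 else v) = (n - K) * v := by
  rw [range_eq_Ico, ← Finset.sum_Ico_consecutive _ (Nat.zero_le K) hK]
  have h1 : ∑ x ∈ Ico 0 K, (if x < K then 0 else v) = 0 := by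
    apply Finset.sum_eq_zero
    intro x hx
    simp only [mem_Ico] at hx
    simp [hx.2]
  have h2 : ∑ x ∈ Ico K n, (if x < K then 0 else v) = (n - K) * v := by
    rw [Finset.sum_congr rfl (fun x hx => ?_), Finset.sum_const, Nat.card_Ico, smul_eq_mul]
    simp only [mem_Ico] at hx
    simp [Nat.not_lt.2 hx.1]
  rw [h1, h2, zero_add]

-- ### raw nat lemmas
private lemma nat_delta_sub {n a b c x d : ℕ} (hn : 0 < n) (ha : a < n)
    (hbv : b = (a + x) % n) (hd : d = (c + n - a) % n) (hx : x ≤ d) :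
    (c + n - b) % n = d - x := by
  have hb : b < n := hbv ▸ Nat.mod_lt _ hn
  have hdn : d < n := hd ▸ Nat.mod_lt _ hn
  have h1 : d + a ≡ c + n [MOD n] := by
    have := (Nat.mod_modEq (c + n - a) n).add_right a
    rw [← hd] at this
    have he : c + n - a + a = c + n := by omega
    rwa [he] at this
  have h2 : b ≡ a + x [MOD n] := hbv ▸ Nat.mod_modEq _ _
  have e1 : (c + n - b) % n + (b + x + a) ≡ d + a + x + a [MOD n] := by
    have s1 : (c + n - b) % n + (b + x + a) ≡ (c + n - b) + (b + x + a) [MOD n] :=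
      (Nat.mod_modEq _ _).add_right _
    have he : (c + n - b) + (b + x + a) = (c + n) + (x + a) := by omega
    rw [he] at s1
    have s2 : (c + n) + (x + a) ≡ (d + a) + (x + a) [MOD n] := h1.symm.add_right _
    have he2 : (d + a) + (x + a) = d + a + x + a := by omega
    rw [he2] at s2
    exact s1.trans s2
  have e2 : (d - x) + (b + x + a) ≡ d + a + x + a [MOD n] := by
    have s1 : (d - x) + (b + x + a) = d + a + b := by omega
    have s2 : d + a + b ≡ d + a + (a + x) [MOD n] := h2.add_left _
    have he : d + a + (a + x) = d + a + x + a := by omega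
    rw [s1]; rw [he] at s2; exact s2
  have := (e1.trans e2.symm)
  have hc := Nat.ModEq.add_right_cancel' (b + x + a) this
  exact modeq_eq_of_lt hc (Nat.mod_lt _ hn) (by omega)

private lemma nat_delta_modeq {n a b c x d d' : ℕ} (hn : 0 < n) (ha : a < n)
    (hbv : b = (a + x) % n) (hd : d = (c + n - a) % n) (hd' : d' = (c + n - b) % n) :
    d' + x ≡ d [MOD n] := by
  have hb : b < n := hbv ▸ Nat.mod_lt _ hn
  have h1 : d + a ≡ c + n [MOD n] := by
    have := (Nat.mod_modEq (c + n - a) n).add_right a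
    rw [← hd] at this
    have he : c + n - a + a = c + n := by omega
    rwa [he] at this
  have h2 : b ≡ a + x [MOD n] := hbv ▸ Nat.mod_modEq _ _
  have s1 : d' + x + b ≡ (c + n - b) + (x + b) [MOD n] := by
    have := (Nat.mod_modEq (c + n - b) n).add_right (x + b)
    rw [← hd'] at this
    have he : d' + x + b = d' + (x + b) := by omega
    rwa [he]
  have he : (c + n - b) + (x + b) = (c + n) + x := by omega
  rw [he] at s1
  have s2 : (c + n) + x ≡ (d + a) + x [MOD n] := h1.symm.add_right _
  have s3 : (d + a) + x ≡ d + b [MOD n] := by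
    have := h2.symm.add_left d
    have he2 : (d + a) + x = d + (a + x) := by omega
    rwa [he2]
  have : d' + x + b ≡ d + b [MOD n] := (s1.trans s2).trans s3
  exact Nat.ModEq.add_right_cancel' b this

-- ### Fin-level lemmas
section
variable {κ m : ℕ}

private lemma hN (hκ : 1 ≤ κ) (hm : 1 ≤ m) : 0 < κ ^ m * m :=
  Nat.mul_pos (Nat.pow_pos hκ) hm

private lemma m_dvd_N : m ∣ κ ^ m * m := ⟨κ ^ m, mul_comm _ _⟩

private lemma clockDelta_lt {n : ℕ} (hn : 0 < n) (u v : Fin n) : clockDelta n u v < n :=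
  Nat.mod_lt _ hn

private lemma clockDelta_eq_zero_iff {n : ℕ} (hn : 0 < n) (u t : Fin n) :
    clockDelta n u t = 0 ↔ u = t := by
  unfold clockDelta
  constructor
  · intro h
    have hd : n ∣ ((t : ℕ) + n - u) := Nat.dvd_of_mod_eq_zero h
    obtain ⟨k, hk⟩ := hd
    have h1 : (u : ℕ) < n := u.isLt
    have h2 : (t : ℕ) < n := t.isLt
    have : (u : ℕ) = (t : ℕ) := by
      rcases Nat.lt_or_ge k 2 with hk2 | hk2
      · interval_cases k <;> omega
      · have : n * 2 ≤ n * k := Nat.mul_le_mul_left n hk2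
        omega
    exact Fin.ext this
  · rintro rfl
    have h1 : (u : ℕ) < n := u.isLt
    have : (u : ℕ) + n - u = n := by omega
    rw [this, Nat.mod_self]

/-- The chosen greedy next hop satisfies `δ' ≤ d - (1 + q·m·κ^ℓ)` for any feasible `q`. -/
private lemma greedy_le (hκ : 1 ≤ κ) (hm : 1 ≤ m) (t u v : Fin (κ ^ m * m)) (hgs : clockGreedyStep κ m t u v)
    (q : ℕ) (hq : q < κ) (hx : 1 + q * (m * κ ^ clockLevel m u) ≤ clockDelta (κ ^ m * m) u t) :
    clockDelta (κ ^ m * m) v t ≤ clockDelta (κ ^ m * m) u t - (1 + q * (m * κ ^ clockLevel m u)) := by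
  have hn : 0 < κ ^ m * m := hN hκ hm
  set x := 1 + q * (m * κ ^ clockLevel m u) with hxdef
  set v' : Fin (κ ^ m * m) := ⟨((u : ℕ) + (1 + q * m * κ ^ clockLevel m u)) % (κ ^ m * m),
    Nat.mod_lt _ hn⟩ with hv'
  have hedge : clockEdge κ m u v' := ⟨q, hq, rfl⟩
  have h1 : clockDelta (κ ^ m * m) v t ≤ clockDelta (κ ^ m * m) v' t := hgs.2 v' hedge
  have h2 : clockDelta (κ ^ m * m) v' t = clockDelta (κ ^ m * m) u t - x := by
    apply nat_delta_sub hn u.isLt _ rfl hx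
    show (v' : ℕ) = ((u : ℕ) + x) % (κ ^ m * m)
    rw [hv', hxdef]
    simp [Nat.mul_assoc]
  omega

/-- Any greedy step decreases the clockwise distance by `1` modulo `m`. -/
private lemma greedy_modeq (hκ : 1 ≤ κ) (hm : 1 ≤ m) (t u v : Fin (κ ^ m * m)) (hgs : clockGreedyStep κ m t u v) :
    clockDelta (κ ^ m * m) v t + 1 ≡ clockDelta (κ ^ m * m) u t [MOD m] := by
  have hn : 0 < κ ^ m * m := hN hκ hm
  obtain ⟨i, hi, hv⟩ := hgs.1
  have h := nat_delta_modeq (n := κ ^ m * m) (x := 1 + i * m * κ ^ clockLevel m u)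
    (c := (t : ℕ)) (d := clockDelta (κ ^ m * m) u t) (d' := clockDelta (κ ^ m * m) v t)
    hn u.isLt hv rfl rfl
  have hmm : clockDelta (κ ^ m * m) v t + (1 + i * m * κ ^ clockLevel m u)
      ≡ clockDelta (κ ^ m * m) u t [MOD m] := h.of_dvd (m_dvd_N)
  have h0 : clockDelta (κ ^ m * m) v t + 1 + i * m * κ ^ clockLevel m u
      ≡ clockDelta (κ ^ m * m) v t + 1 + 0 [MOD m] := by
    apply Nat.ModEq.add_left
    exact (Nat.modEq_zero_iff_dvd).2 ⟨i * κ ^ clockLevel m u, by ring⟩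
  have he : clockDelta (κ ^ m * m) v t + (1 + i * m * κ ^ clockLevel m u)
      = clockDelta (κ ^ m * m) v t + 1 + i * m * κ ^ clockLevel m u := by ring
  rw [he] at hmm
  simpa using (h0.symm.trans hmm)

/-- Any greedy step advances the node by `1` modulo `m`. -/
private lemma greedy_node_modeq (t u v : Fin (κ ^ m * m)) (hgs : clockGreedyStep κ m t u v) :
    (v : ℕ) ≡ (u : ℕ) + 1 [MOD m] := by
  obtain ⟨i, hi, hv⟩ := hgs.1
  have h1 : (v : ℕ) ≡ (u : ℕ) + (1 + i * m * κ ^ clockLevel m u) [MOD m] :=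
    (hv ▸ Nat.mod_modEq _ _).of_dvd (m_dvd_N)
  have h0 : (u : ℕ) + 1 + i * m * κ ^ clockLevel m u ≡ (u : ℕ) + 1 + 0 [MOD m] := by
    apply Nat.ModEq.add_left
    exact (Nat.modEq_zero_iff_dvd).2 ⟨i * κ ^ clockLevel m u, by ring⟩
  have he : (u : ℕ) + (1 + i * m * κ ^ clockLevel m u)
      = (u : ℕ) + 1 + i * m * κ ^ clockLevel m u := by ring
  rw [he] at h1
  simpa using h1.trans h0

end

/-- The pointwise bound on the greedy route length. -/
private lemma route_bound {κ m : ℕ} (hκ : 1 ≤ κ) (hm : 1 ≤ m)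
    (w : Fin (κ ^ m * m) → Fin (κ ^ m * m) → ℕ → Fin (κ ^ m * m))
    (len : Fin (κ ^ m * m) → Fin (κ ^ m * m) → ℕ)
    (h0 : ∀ s t, w s t 0 = s)
    (hend : ∀ s t, w s t (len s t) = t)
    (hne : ∀ s t, ∀ j < len s t, w s t j ≠ t)
    (hstep : ∀ s t, ∀ j < len s t, clockGreedyStep κ m t (w s t j) (w s t (j + 1)))
    (s t : Fin (κ ^ m * m)) :
    len s t ≤ if clockDelta (κ ^ m * m) s t = 0 then 0 else
      (m - (s : ℕ) % m) + (clockDelta (κ ^ m * m) s t + m * m - (m - (s : ℕ) % m)) % m +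
      (if clockDelta (κ ^ m * m) s t < m * κ ^ (m - (s : ℕ) % m) then 0 else m) := by
  have hn : 0 < κ ^ m * m := hN hκ hm
  set T := len s t with hT
  set U : ℕ → Fin (κ ^ m * m) := w s t with hU
  set D : ℕ → ℕ := fun j => clockDelta (κ ^ m * m) (U j) t with hD
  have hU0 : U 0 = s := h0 s t
  have hd0 : D 0 = clockDelta (κ ^ m * m) s t := by rw [hD]; simp [hU0]
  have DT : D T = 0 := by
    rw [hD]; simp only []
    exact (clockDelta_eq_zero_iff hn _ t).2 (hend s t)
  have Dpos : ∀ j < T, 1 ≤ D j := by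
    intro j hj
    have := hne s t j hj
    have h2 : ¬ (D j = 0) := fun h => this ((clockDelta_eq_zero_iff hn _ t).1 h)
    omega
  have step : ∀ j < T, clockGreedyStep κ m t (U j) (U (j + 1)) := fun j hj => hstep s t j hj
  have hDfold : ∀ j, clockDelta (κ ^ m * m) (U j) t = D j := fun _ => rfl
  -- R1: distance decreases by 1 mod m each step
  have R1 : ∀ j, j ≤ T → D j + j ≡ D 0 [MOD m] := by
    intro j
    induction j with
    | zero => intro _; rfl
    | succ j ih =>
        intro hj
        have hj' : j < T := lt_of_lt_of_le (Nat.lt_succ_self j) hj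
        have h1 : D (j + 1) + 1 ≡ D j [MOD m] := greedy_modeq hκ hm t (U j) (U (j + 1)) (step j hj')
        have he : D (j + 1) + (j + 1) = (D (j + 1) + 1) + j := by omega
        rw [he]
        exact (h1.add_right j).trans (ih (le_of_lt hj'))
  -- R2: node residue advances by 1 each step
  have R2 : ∀ j, j ≤ T → ((U j : ℕ)) ≡ (s : ℕ) + j [MOD m] := by
    intro j
    induction j with
    | zero => intro _; rw [hU0]; simpa using Nat.ModEq.refl ((s : ℕ))
    | succ j ih =>
        intro hj
        have hj' : j < T := lt_of_lt_of_le (Nat.lt_succ_self j) hj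
        have h1 : ((U (j + 1) : ℕ)) ≡ (U j : ℕ) + 1 [MOD m] :=
          greedy_node_modeq t (U j) (U (j + 1)) (step j hj')
        have h2 : (U j : ℕ) + 1 ≡ ((s : ℕ) + j) + 1 [MOD m] := (ih (le_of_lt hj')).add_right 1
        have he : (s : ℕ) + j + 1 = (s : ℕ) + (j + 1) := by omega
        rw [he] at h2
        exact h1.trans h2
  -- R3: once the distance is at most m, it decreases by exactly 1 per step
  have R3 : ∀ e j, j ≤ T → D j ≤ m → D j = e → T = j + e := by
    intro e
    induction e with
    | zero =>
        intro j hj _ hDj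
        have h1 : U j = t := (clockDelta_eq_zero_iff hn _ t).1 hDj
        have h2 : ¬ (j < T) := fun hlt => hne s t j hlt h1
        omega
    | succ e ih =>
        intro j hj hDm hDj
        have hjT : j < T := by
          rcases Nat.lt_or_ge j T with h | h
          · exact h
          · exfalso; have : j = T := by omega
            rw [this, DT] at hDj; omega
        have hle := greedy_le hκ hm t (U j) (U (j + 1)) (step j hjT) 0 hκ (by
            simp only [Nat.zero_mul, Nat.add_zero, hDfold]
            exact Dpos j hjT)
        simp only [Nat.zero_mul, Nat.add_zero, hDfold] at hle
        have h1 : D (j + 1) + 1 ≡ D j [MOD m] := greedy_modeq hκ hm t (U j) (U (j + 1)) (step j hjT)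
        rw [hDj] at h1
        have h2 : D (j + 1) ≡ e [MOD m] := Nat.ModEq.add_right_cancel' 1 h1
        have h3 : D (j + 1) = e := modeq_eq_of_lt h2 (by omega) (by omega)
        have := ih (j + 1) hjT (by omega) h3
        omega
  -- R4: synchronized descent
  have R4 : ∀ ℓ j, j ≤ T → ((U j : ℕ)) % m = m - 1 - ℓ → ℓ < m → D j < m * κ ^ (ℓ + 1) →
      T ≤ j + ℓ + 1 ∨ ((j + ℓ + 1 ≤ T) ∧ D (j + ℓ + 1) < m) := by
    intro ℓ
    induction ℓ with
    | zero =>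
        intro j hj hres hlm hDj
        rcases Nat.lt_or_ge j T with hjT | hjT
        swap
        · left; omega
        have hlev : clockLevel m (U j) = 0 := by
          unfold clockLevel; omega
        have hB : 0 < m * κ ^ (0:ℕ) := by positivity
        have hq : (D j - 1) / (m * κ ^ (0:ℕ)) < κ := by
          rw [Nat.div_lt_iff_lt_mul hB]
          have hpow : m * κ ^ (0 + 1) = κ * (m * κ ^ (0:ℕ)) := by ring
          omega
        have hx : 1 + ((D j - 1) / (m * κ ^ (0:ℕ))) * (m * κ ^ (0:ℕ)) ≤ D j := by
          have := Nat.div_mul_le_self (D j - 1) (m * κ ^ (0:ℕ))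
          have := Dpos j hjT
          omega
        have hle := greedy_le hκ hm t (U j) (U (j + 1)) (step j hjT)
          ((D j - 1) / (m * κ ^ (0:ℕ))) hq (by rw [hlev]; simp only [hDfold]; exact hx)
        rw [hlev] at hle
        simp only [hDfold] at hle
        have hdm := Nat.div_add_mod (D j - 1) (m * κ ^ (0:ℕ))
        have hbr : (D j - 1) / (m * κ ^ (0:ℕ)) * (m * κ ^ (0:ℕ))
            = (m * κ ^ (0:ℕ)) * ((D j - 1) / (m * κ ^ (0:ℕ))) := mul_comm _ _
        have h6 : (D j - 1) % (m * κ ^ (0:ℕ)) < m * κ ^ (0:ℕ) := Nat.mod_lt _ hB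
        have hpow0 : m * κ ^ (0:ℕ) = m := by rw [pow_zero, mul_one]
        right
        refine ⟨by omega, ?_⟩
        simp only [Nat.add_zero]
        omega
    | succ k ih =>
        intro j hj hres hlm hDj
        rcases Nat.lt_or_ge j T with hjT | hjT
        swap
        · left; omega
        have hlev : clockLevel m (U j) = k + 1 := by
          unfold clockLevel; omega
        have hB : 0 < m * κ ^ (k + 1) := by positivity
        have hq : (D j - 1) / (m * κ ^ (k + 1)) < κ := by
          rw [Nat.div_lt_iff_lt_mul hB]
          have hpow : m * κ ^ (k + 1 + 1) = κ * (m * κ ^ (k + 1)) := by ring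
          omega
        have hx : 1 + ((D j - 1) / (m * κ ^ (k + 1))) * (m * κ ^ (k + 1)) ≤ D j := by
          have := Nat.div_mul_le_self (D j - 1) (m * κ ^ (k + 1))
          have := Dpos j hjT
          omega
        have hle := greedy_le hκ hm t (U j) (U (j + 1)) (step j hjT)
          ((D j - 1) / (m * κ ^ (k + 1))) hq (by rw [hlev]; simp only [hDfold]; exact hx)
        rw [hlev] at hle
        simp only [hDfold] at hle
        have hdm := Nat.div_add_mod (D j - 1) (m * κ ^ (k + 1))
        have hbr : (D j - 1) / (m * κ ^ (k + 1)) * (m * κ ^ (k + 1))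
            = (m * κ ^ (k + 1)) * ((D j - 1) / (m * κ ^ (k + 1))) := mul_comm _ _
        have hmod : (D j - 1) % (m * κ ^ (k + 1)) < m * κ ^ (k + 1) := Nat.mod_lt _ hB
        have hD1 : D (j + 1) < m * κ ^ (k + 1) := by omega
        -- residue of next node
        have hres1 : ((U (j + 1) : ℕ)) % m = m - 1 - k := by
          have h1 : ((U (j + 1) : ℕ)) ≡ (U j : ℕ) + 1 [MOD m] :=
            greedy_node_modeq t (U j) (U (j + 1)) (step j hjT)
          have h2 : ((U (j + 1) : ℕ)) % m ≡ ((U j : ℕ)) % m + 1 [MOD m] :=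
            (Nat.mod_modEq _ _).trans (h1.trans (((Nat.mod_modEq (U j : ℕ) m).symm).add_right 1))
          rw [hres] at h2
          have he : m - 1 - (k + 1) + 1 = m - 1 - k := by omega
          rw [he] at h2
          exact modeq_eq_of_lt h2 (Nat.mod_lt _ (by omega)) (by omega)
        have := ih (j + 1) hjT hres1 (by omega) hD1
        rcases this with h | h
        · left; omega
        · right; constructor
          · omega
          · have he : j + 1 + k + 1 = j + (k + 1) + 1 := by omega
            rw [he] at h
            exact h.2
  -- main case analysis
  by_cases hzero : clockDelta (κ ^ m * m) s t = 0
  · rw [if_pos hzero]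
    have h1 : U 0 = t := by
      rw [hU0]; exact (clockDelta_eq_zero_iff hn s t).1 hzero
    have h2 : ¬ (0 < T) := fun hlt => hne s t 0 hlt h1
    omega
  · rw [if_neg hzero]
    set d := clockDelta (κ ^ m * m) s t with hddef
    set p := (s : ℕ) % m with hpdef
    have hp : p < m := Nat.mod_lt _ (by omega)
    set tail := (d + m * m - (m - p)) % m with htaildef
    have htail : tail < m := Nat.mod_lt _ (by omega)
    -- congruence: tail + (m - p) ≡ d [MOD m]
    have htailc : tail + (m - p) ≡ d [MOD m] := by
      have h1 : tail + (m - p) ≡ (d + m * m - (m - p)) + (m - p) [MOD m] :=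
        (Nat.mod_modEq _ _).add_right _
      have he : (d + m * m - (m - p)) + (m - p) = d + m * m := by
        have hmm2 : m ≤ m * m := Nat.le_mul_of_pos_left m (by omega)
        omega
      rw [he] at h1
      have h2 : d + m * m ≡ d + 0 [MOD m] := Nat.ModEq.add_left d
        ((Nat.modEq_zero_iff_dvd).2 ⟨m, rfl⟩)
      simpa using h1.trans h2
    -- helper: conclude T = C + tail in the "right branch" situations
    have final : ∀ C, C ≡ m - p [MOD m] → C ≤ T → D C < m → T = C + tail := by
      intro C hCc hCT hDC
      have h1 : D C + C ≡ d [MOD m] := by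
        have := R1 C hCT
        rwa [hd0] at this
      have h3 : T = C + D C := R3 (D C) C hCT (by omega) rfl
      have h4 : tail + C ≡ d [MOD m] := (hCc.add_left tail).trans htailc
      have h5 : D C ≡ tail [MOD m] := Nat.ModEq.add_right_cancel' C (h1.trans h4.symm)
      have h6 : D C = tail := modeq_eq_of_lt h5 hDC htail
      omega
    have hres0 : ((U 0 : ℕ)) % m = m - 1 - (m - 1 - p) := by
      rw [hU0]
      rw [← hpdef]
      omega
    by_cases hsync : d < m * κ ^ (m - p)
    · rw [if_pos hsync]
      have hmp : m - 1 - p + 1 = m - p := by omega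
      have hR4 := R4 (m - 1 - p) 0 (Nat.zero_le _) hres0 (by omega)
        (by rw [hmp, hd0]; exact hsync)
      rcases hR4 with h | h
      · omega
      · have hC : 0 + (m - 1 - p) + 1 = m - p := by omega
        rw [hC] at h
        have := final (m - p) (Nat.ModEq.refl _) h.1 h.2
        omega
    · rw [if_neg hsync]
      rcases Nat.lt_or_ge T (m - p + 1) with hsmall | hbig
      · omega
      · -- j := m - p ≤ T, node there has residue m - 1, fully synchronized
        set j := m - p with hjdef
        have hjT : j ≤ T := by omega
        have hresj : ((U j : ℕ)) % m = m - 1 - (m - 1) := by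
          have h1 := R2 j hjT
          have h2 : ((U j : ℕ)) % m ≡ ((s : ℕ) + j) % m [MOD m] :=
            (Nat.mod_modEq _ _).trans (h1.trans (Nat.mod_modEq _ _).symm)
          have h3 : ((s : ℕ) + j) % m = 0 := by
            have hs := Nat.div_add_mod (s : ℕ) m
            have he : (s : ℕ) + j = m * ((s : ℕ) / m + 1) := by
              rw [← hpdef] at hs
              have : (s : ℕ) + j = m * ((s : ℕ) / m) + m := by omega
              rw [this]; ring
            rw [he, Nat.mul_mod_right]
          rw [h3] at h2
          have h4 : ((U j : ℕ)) % m = 0 := modeq_eq_of_lt h2 (Nat.mod_lt _ (by omega)) (by omega)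
          omega
        have hDjlt : D j < m * κ ^ (m - 1 + 1) := by
          have h1 : D j < κ ^ m * m := clockDelta_lt hn _ _
          have he : m * κ ^ (m - 1 + 1) = κ ^ m * m := by
            rw [show m - 1 + 1 = m by omega]; ring
          omega
        have hR4 := R4 (m - 1) j hjT hresj (by omega) hDjlt
        rcases hR4 with h | h
        · omega
        · have hCc : j + (m - 1) + 1 ≡ m - p [MOD m] := by
            have he : j + (m - 1) + 1 = (m - p) + m := by omega
            rw [he]
            have h2 : (m - p) + m ≡ (m - p) + 0 [MOD m] :=
              Nat.ModEq.add_left _ ((Nat.modEq_zero_iff_dvd).2 dvd_rfl)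
            simpa using h2
          have := final (j + (m - 1) + 1) hCc h.1 h.2
          omega

private def Gfun (κ m p x : ℕ) : ℕ :=
  if x = 0 then 0 else
    (m - p) + (x + m * m - (m - p)) % m + (if x < m * κ ^ (m - p) then 0 else m)

private lemma route_bound' {κ m : ℕ} (hκ : 1 ≤ κ) (hm : 1 ≤ m)
    (w : Fin (κ ^ m * m) → Fin (κ ^ m * m) → ℕ → Fin (κ ^ m * m))
    (len : Fin (κ ^ m * m) → Fin (κ ^ m * m) → ℕ)
    (h0 : ∀ s t, w s t 0 = s)
    (hend : ∀ s t, w s t (len s t) = t)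
    (hne : ∀ s t, ∀ j < len s t, w s t j ≠ t)
    (hstep : ∀ s t, ∀ j < len s t, clockGreedyStep κ m t (w s t j) (w s t (j + 1)))
    (s t : Fin (κ ^ m * m)) :
    len s t ≤ Gfun κ m ((s : ℕ) % m) (clockDelta (κ ^ m * m) s t) := by
  unfold Gfun
  exact route_bound hκ hm w len h0 hend hne hstep s t

private lemma clockDelta_add {n : ℕ} [NeZero n] (s x : Fin n) :
    clockDelta n s (s + x) = (x : ℕ) := by
  have hn : 0 < n := Nat.pos_of_ne_zero (NeZero.ne n)
  unfold clockDelta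
  have hb : ((s + x : Fin n) : ℕ) = ((s : ℕ) + x) % n := Fin.val_add s x
  rw [hb]
  have hs : (s : ℕ) < n := s.isLt
  have hA : ((s : ℕ) + x) % n < n := Nat.mod_lt _ hn
  have s1 : (((s : ℕ) + x) % n + n - (s : ℕ)) % n + (s : ℕ)
      ≡ (((s : ℕ) + x) % n + n - (s : ℕ)) + (s : ℕ) [MOD n] :=
    (Nat.mod_modEq _ _).add_right _
  have he : (((s : ℕ) + x) % n + n - (s : ℕ)) + (s : ℕ) = ((s : ℕ) + x) % n + n := by omega
  rw [he] at s1
  have s2 : ((s : ℕ) + x) % n + n ≡ ((s : ℕ) + x) % n + 0 [MOD n] :=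
    Nat.ModEq.add_left _ ((Nat.modEq_zero_iff_dvd).2 dvd_rfl)
  have s3 : ((s : ℕ) + x) % n + 0 ≡ (x : ℕ) + (s : ℕ) [MOD n] := by
    have h := Nat.mod_modEq ((s : ℕ) + x) n
    have he2 : (s : ℕ) + (x : ℕ) = (x : ℕ) + s := by omega
    rw [Nat.add_zero]
    exact h.trans (by rw [he2])
  have s4 := (s1.trans (s2.trans s3))
  have s5 := Nat.ModEq.add_right_cancel' (s : ℕ) s4
  exact modeq_eq_of_lt s5 (Nat.mod_lt _ hn) x.isLt

private lemma sum_delta_reindex {n : ℕ} (hn : 0 < n) (s : Fin n) (f : ℕ → ℕ) :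
    ∑ t : Fin n, f (clockDelta n s t) = ∑ x ∈ Finset.range n, f x := by
  haveI : NeZero n := ⟨by omega⟩
  have h1 : ∑ x : Fin n, f (clockDelta n s ((Equiv.addLeft s) x))
      = ∑ t : Fin n, f (clockDelta n s t) :=
    Equiv.sum_comp (Equiv.addLeft s) (fun t => f (clockDelta n s t))
  rw [← h1]
  have h2 : ∀ x : Fin n, f (clockDelta n s ((Equiv.addLeft s) x)) = f ((x : ℕ)) := by
    intro x
    have : (Equiv.addLeft s) x = s + x := rfl
    rw [this, clockDelta_add]
  rw [Finset.sum_congr rfl (fun x _ => h2 x)]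
  exact Fin.sum_univ_eq_sum_range (fun x => f x) n

private lemma sum_G_bound {κ m : ℕ} (hκ : 1 ≤ κ) (hm : 1 ≤ m) (p : ℕ) (hp : p < m) :
    (∑ x ∈ Finset.range (κ ^ m * m), Gfun κ m p x) + (m - p)
      ≤ (κ ^ m * m) * (m - p) + κ ^ m * (∑ x ∈ Finset.range m, x)
        + ((κ ^ m * m) - m * κ ^ (m - p)) * m := by
  have hn : 0 < κ ^ m * m := hN hκ hm
  set H : ℕ → ℕ := fun x =>
    (m - p) + (x + m * m - (m - p)) % m + (if x < m * κ ^ (m - p) then 0 else m) with hHdef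
  have hGH : ∀ x, x ≠ 0 → Gfun κ m p x = H x := by
    intro x hx; unfold Gfun; rw [if_neg hx]
  have hG0 : Gfun κ m p 0 = 0 := if_pos rfl
  have h0mem : (0 : ℕ) ∈ Finset.range (κ ^ m * m) := Finset.mem_range.2 hn
  have step1 : (∑ x ∈ Finset.range (κ ^ m * m), Gfun κ m p x) + (m - p)
      ≤ ∑ x ∈ Finset.range (κ ^ m * m), H x := by
    rw [← Finset.sum_erase_add (Finset.range (κ ^ m * m)) H h0mem]
    have e1 : ∑ x ∈ (Finset.range (κ ^ m * m)).erase 0, Gfun κ m p x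
        = ∑ x ∈ Finset.range (κ ^ m * m), Gfun κ m p x := Finset.sum_erase _ hG0
    have e2 : ∑ x ∈ (Finset.range (κ ^ m * m)).erase 0, Gfun κ m p x
        = ∑ x ∈ (Finset.range (κ ^ m * m)).erase 0, H x :=
      Finset.sum_congr rfl (fun x hx => hGH x (Finset.ne_of_mem_erase hx))
    rw [← e1, e2]
    apply Nat.add_le_add_left
    have : H 0 = (m - p) + (0 + m * m - (m - p)) % m + (if (0:ℕ) < m * κ ^ (m - p) then 0 else m) := rfl
    rw [this]
    exact le_trans (Nat.le_add_right _ _) (Nat.le_add_right _ _)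
  have hmm2 : m ≤ m * m := Nat.le_mul_of_pos_left m (by omega)
  have hK : m * κ ^ (m - p) ≤ κ ^ m * m := by
    have h1 : κ ^ (m - p) ≤ κ ^ m := Nat.pow_le_pow_right hκ (by omega)
    calc m * κ ^ (m - p) ≤ m * κ ^ m := Nat.mul_le_mul_left m h1
      _ = κ ^ m * m := mul_comm _ _
  have hA : ∑ _x ∈ Finset.range (κ ^ m * m), (m - p) = (κ ^ m * m) * (m - p) := by
    rw [Finset.sum_const, Finset.card_range, smul_eq_mul]
  have hB : ∑ x ∈ Finset.range (κ ^ m * m), (x + m * m - (m - p)) % m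
      = κ ^ m * (∑ x ∈ Finset.range m, x) := by
    have e0 : ∀ x, (x + m * m - (m - p)) % m = (x + (m * m - (m - p))) % m := by
      intro x; congr 1; omega
    rw [Finset.sum_congr rfl (fun x _ => e0 x)]
    rw [sum_range_mul_blocks (fun x => (x + (m * m - (m - p))) % m) (κ ^ m) m]
    have e1 : ∀ a b : ℕ, (a * m + b + (m * m - (m - p))) % m
        = (b + (m * m - (m - p))) % m := by
      intro a b
      have he : a * m + b + (m * m - (m - p)) = (b + (m * m - (m - p))) + a * m := by omega
      rw [he, Nat.add_mul_mod_self_right]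
    calc ∑ a ∈ Finset.range (κ ^ m), ∑ b ∈ Finset.range m, (a * m + b + (m * m - (m - p))) % m
        = ∑ _a ∈ Finset.range (κ ^ m), ∑ b ∈ Finset.range m, (b + (m * m - (m - p))) % m := by
          exact Finset.sum_congr rfl (fun a _ => Finset.sum_congr rfl (fun b _ => e1 a b))
      _ = ∑ _a ∈ Finset.range (κ ^ m), ∑ x ∈ Finset.range m, x := by
          exact Finset.sum_congr rfl (fun a _ => sum_range_add_mod m _ (by omega))
      _ = κ ^ m * (∑ x ∈ Finset.range m, x) := by
          rw [Finset.sum_const, Finset.card_range, smul_eq_mul]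
  have hC : ∑ x ∈ Finset.range (κ ^ m * m), (if x < m * κ ^ (m - p) then 0 else m)
      = ((κ ^ m * m) - m * κ ^ (m - p)) * m := sum_range_indicator _ _ _ hK
  calc (∑ x ∈ Finset.range (κ ^ m * m), Gfun κ m p x) + (m - p)
      ≤ ∑ x ∈ Finset.range (κ ^ m * m), H x := step1
    _ = ∑ x ∈ Finset.range (κ ^ m * m),
          ((m - p) + (x + m * m - (m - p)) % m + (if x < m * κ ^ (m - p) then 0 else m)) := rfl
    _ = (κ ^ m * m) * (m - p) + κ ^ m * (∑ x ∈ Finset.range m, x)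
        + ((κ ^ m * m) - m * κ ^ (m - p)) * m := by
        rw [Finset.sum_add_distrib, Finset.sum_add_distrib, hA, hB, hC]

private lemma final_arith (E g P Q SAs N Tot m : ℕ) (hE : 1 ≤ E) (hm : 1 ≤ m)
    (hN : N = E * m) (hP : P = g + m) (hg : g * 2 = m * (m - 1)) (hQ : E ≤ Q)
    (hTot : Tot ≤ E * SAs)
    (HQ : SAs + (P + (m * m) * Q) ≤ N * P + m * (E * g + N * m)) :
    Tot < (2 * m - 1) * N ^ 2 := by
  obtain ⟨m', rfl⟩ : ∃ m', m = m' + 1 := ⟨m - 1, by omega⟩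
  have h1 : 2 * (m' + 1) - 1 = 2 * m' + 1 := by omega
  rw [h1]
  have hg' : g * 2 = (m' + 1) * m' := by simpa using hg
  subst hN hP
  have HQE := Nat.mul_le_mul_left E HQ
  have hQE : E * (((m' + 1) * (m' + 1)) * E) ≤ E * (((m' + 1) * (m' + 1)) * Q) :=
    Nat.mul_le_mul_left E (Nat.mul_le_mul_left ((m' + 1) * (m' + 1)) hQ)
  have hg2 : E * E * (m' + 1) * (g * 2) = E * E * (m' + 1) * ((m' + 1) * m') := by rw [hg']
  have hEm : 1 ≤ E * (m' + 1) := Nat.mul_pos hE (Nat.succ_pos m')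
  nlinarith [HQE, hQE, hg2, hTot, hE, hEm]

/-- In `B_clockwise(κ, m)`, the average over all ordered pairs `(s, t)` of the length of a
greedy route (w.r.t. `δ_clockwise`) from `s` to `t` is less than `2m - 1`.  Here `w s t` is
an arbitrary greedy route from `s` to `t` (ties broken arbitrarily) and `len s t` is its
number of hops, i.e. the first index at which it hits `t`. -/
theorem clockwise_greedy_average (κ m : ℕ) (hκ : 1 ≤ κ) (hm : 1 ≤ m)
    (w : Fin (κ ^ m * m) → Fin (κ ^ m * m) → ℕ → Fin (κ ^ m * m))
    (len : Fin (κ ^ m * m) → Fin (κ ^ m * m) → ℕ)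
    (h0 : ∀ s t, w s t 0 = s)
    (hend : ∀ s t, w s t (len s t) = t)
    (hne : ∀ s t, ∀ j < len s t, w s t j ≠ t)
    (hstep : ∀ s t, ∀ j < len s t, clockGreedyStep κ m t (w s t j) (w s t (j + 1))) :
    (∑ s : Fin (κ ^ m * m), ∑ t : Fin (κ ^ m * m), (len s t : ℝ)) /
      ((κ ^ m * m : ℕ) : ℝ) ^ 2 < 2 * m - 1 := by
  have hn : 0 < κ ^ m * m := hN hκ hm
  have hE : 1 ≤ κ ^ m := Nat.pow_pos hκ
  set g := ∑ x ∈ Finset.range m, x with hgdef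
  set SA : ℕ → ℕ := fun p => ∑ x ∈ Finset.range (κ ^ m * m), Gfun κ m p x with hSAdef
  set P := ∑ b ∈ Finset.range m, (m - b) with hPdef
  set Q := ∑ b ∈ Finset.range m, κ ^ (m - b) with hQdef
  set Tot := ∑ s : Fin (κ ^ m * m), ∑ t : Fin (κ ^ m * m), len s t with hTotdef
  -- per-source bound
  have key : ∀ s : Fin (κ ^ m * m), (∑ t : Fin (κ ^ m * m), len s t) ≤ SA ((s : ℕ) % m) := by
    intro s
    calc ∑ t : Fin (κ ^ m * m), len s t
        ≤ ∑ t : Fin (κ ^ m * m), Gfun κ m ((s : ℕ) % m) (clockDelta (κ ^ m * m) s t) :=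
          Finset.sum_le_sum (fun t _ => route_bound' hκ hm w len h0 hend hne hstep s t)
      _ = SA ((s : ℕ) % m) := sum_delta_reindex hn s _
  have hTot : Tot ≤ κ ^ m * (∑ b ∈ Finset.range m, SA b) := by
    have total1 : Tot ≤ ∑ s : Fin (κ ^ m * m), SA ((s : ℕ) % m) :=
      Finset.sum_le_sum (fun s _ => key s)
    have total2 : ∑ s : Fin (κ ^ m * m), SA ((s : ℕ) % m)
        = ∑ y ∈ Finset.range (κ ^ m * m), SA (y % m) :=
      Fin.sum_univ_eq_sum_range (fun y => SA (y % m)) (κ ^ m * m)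
    have total3 : ∑ y ∈ Finset.range (κ ^ m * m), SA (y % m)
        = κ ^ m * (∑ b ∈ Finset.range m, SA b) := by
      rw [sum_range_mul_blocks (fun y => SA (y % m)) (κ ^ m) m]
      have e1 : ∀ a ∈ Finset.range (κ ^ m),
          ∑ b ∈ Finset.range m, SA ((a * m + b) % m) = ∑ b ∈ Finset.range m, SA b := by
        intro a _
        apply Finset.sum_congr rfl
        intro b hb
        rw [Finset.mem_range] at hb
        have he : a * m + b = b + a * m := by omega
        rw [he, Nat.add_mul_mod_self_right, Nat.mod_eq_of_lt hb]
      rw [Finset.sum_congr rfl e1, Finset.sum_const, Finset.card_range, smul_eq_mul]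
    calc Tot ≤ _ := total1
      _ = _ := total2
      _ = _ := total3
  -- summed per-level bound
  have HQb : ∀ b ∈ Finset.range m, SA b + ((m - b) + (m * m) * κ ^ (m - b))
      ≤ (κ ^ m * m) * (m - b) + (κ ^ m * g + (κ ^ m * m) * m) := by
    intro b hb
    rw [Finset.mem_range] at hb
    have h1 := sum_G_bound hκ hm b hb
    have hfold : ∑ x ∈ Finset.range (κ ^ m * m), Gfun κ m b x = SA b := rfl
    have gfold : ∑ x ∈ Finset.range m, x = g := rfl
    rw [hfold, gfold] at h1
    have hK : m * κ ^ (m - b) ≤ κ ^ m * m := by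
      have h2 : κ ^ (m - b) ≤ κ ^ m := Nat.pow_le_pow_right hκ (by omega)
      calc m * κ ^ (m - b) ≤ m * κ ^ m := Nat.mul_le_mul_left m h2
        _ = κ ^ m * m := mul_comm _ _
    have h3 : ((κ ^ m * m) - m * κ ^ (m - b)) * m + (m * κ ^ (m - b)) * m
        = (κ ^ m * m) * m := by
      rw [← Nat.add_mul]; congr 1; omega
    have h4 : (m * m) * κ ^ (m - b) = (m * κ ^ (m - b)) * m := by ring
    omega
  have Hsum0 := Finset.sum_le_sum HQb
  have eL : ∑ b ∈ Finset.range m, (SA b + ((m - b) + (m * m) * κ ^ (m - b)))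
      = (∑ b ∈ Finset.range m, SA b) + (P + (m * m) * Q) := by
    rw [Finset.sum_add_distrib, Finset.sum_add_distrib, ← Finset.mul_sum]
  have eR : ∑ b ∈ Finset.range m, ((κ ^ m * m) * (m - b) + (κ ^ m * g + (κ ^ m * m) * m))
      = (κ ^ m * m) * P + m * (κ ^ m * g + (κ ^ m * m) * m) := by
    rw [Finset.sum_add_distrib, ← Finset.mul_sum, Finset.sum_const, Finset.card_range,
      smul_eq_mul]
  rw [eL, eR] at Hsum0
  -- closed forms for P, Q, g
  have hP : P = g + m := by
    have h := Finset.sum_range_reflect (fun b => m - b) m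
    have h2 : ∑ j ∈ Finset.range m, (m - (m - 1 - j)) = ∑ j ∈ Finset.range m, (j + 1) := by
      apply Finset.sum_congr rfl
      intro j hj
      rw [Finset.mem_range] at hj
      omega
    have h3 : ∑ j ∈ Finset.range m, (j + 1) = g + m := by
      rw [Finset.sum_add_distrib, Finset.sum_const, Finset.card_range, smul_eq_mul, mul_one]
    rw [hPdef, ← h, h2, h3]
  have hg : g * 2 = m * (m - 1) := Finset.sum_range_id_mul_two m
  have hQ : κ ^ m ≤ Q := by
    have h := Finset.single_le_sum (f := fun b => κ ^ (m - b))
      (fun i _ => Nat.zero_le _) (Finset.mem_range.2 (show 0 < m by omega))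
    simpa using h
  -- the ℕ inequality
  have hfin : Tot < (2 * m - 1) * (κ ^ m * m) ^ 2 :=
    final_arith (κ ^ m) g P Q (∑ b ∈ Finset.range m, SA b) (κ ^ m * m) Tot m
      hE hm rfl hP hg hQ hTot Hsum0
  -- conclude over ℝ
  have hpos : (0 : ℝ) < ((κ ^ m * m : ℕ) : ℝ) ^ 2 := by positivity
  rw [div_lt_iff₀ hpos]
  have hcast : ((Tot : ℕ) : ℝ) = ∑ s : Fin (κ ^ m * m), ∑ t : Fin (κ ^ m * m), (len s t : ℝ) := by
    rw [hTotdef, Nat.cast_sum]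
    exact Finset.sum_congr rfl (fun s _ => Nat.cast_sum _ _)
  rw [← hcast]
  have h2 : ((Tot : ℕ) : ℝ) < (((2 * m - 1) * (κ ^ m * m) ^ 2 : ℕ) : ℝ) := Nat.cast_lt.2 hfin
  have h3 : (((2 * m - 1) * (κ ^ m * m) ^ 2 : ℕ) : ℝ)
      = (2 * (m : ℝ) - 1) * ((κ ^ m * m : ℕ) : ℝ) ^ 2 := by
    push_cast [Nat.cast_sub (show 1 ≤ 2 * m by omega)]
    ring
  rw [h3] at h2
  exact h2
end

section
/- In the network B_clockwise(κ,m), for every ordered pair of nodes (s,t) there exists a directed path from s to t of length at most 2m−1 (i.e., the directed diameter of B_clockwise(κ,m) is at most 2m−1). -/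
open Finset

lemma myModMul (q a b : ℕ) : q % (a * b) = q % a + a * (q / a % b) := by
  rcases Nat.eq_zero_or_pos a with rfl | ha
  · simp
  conv_lhs => rw [← Nat.div_add_mod (q % (a*b)) a]
  rw [Nat.mod_mul_right_div_self, Nat.mod_mod_of_dvd _ ⟨b, rfl⟩, Nat.add_comm]

lemma digitSum (κ : ℕ) : ∀ (m q : ℕ),
    ∑ l ∈ range m, (q / κ ^ l % κ) * κ ^ l = q % κ ^ m := by
  intro m
  induction m with
  | zero => simp [Nat.mod_one]
  | succ m ih =>
    intro q
    rw [Finset.sum_range_succ']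
    have h2 : ∑ l ∈ range m, (q / κ ^ (l+1) % κ) * κ ^ (l+1)
        = κ * ∑ l ∈ range m, ((q / κ) / κ ^ l % κ) * κ ^ l := by
      rw [Finset.mul_sum]
      refine Finset.sum_congr rfl fun l _ => ?_
      rw [Nat.div_div_eq_div_mul, ← pow_succ', pow_succ']
      ring
    rw [h2, ih, pow_succ', myModMul]
    simp [pow_zero, mul_one]
    ring

lemma modShift (m a : ℕ) (hm : 0 < m) :
    ∀ j < m, ((a + j) % m + m - a % m) % m = j := by
  intro j hj
  have hr : a % m < m := Nat.mod_lt _ hm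
  rw [Nat.add_mod a j, Nat.mod_eq_of_lt hj]
  set r := a % m with hrdef
  rcases Nat.lt_or_ge (r + j) m with h | h
  · rw [Nat.mod_eq_of_lt h]
    have : r + j + m - r = j + m := by omega
    rw [this, Nat.add_mod_right, Nat.mod_eq_of_lt hj]
  · have h2 : (r + j) % m = r + j - m := by
      rw [Nat.mod_eq_sub_mod h, Nat.mod_eq_of_lt (by omega)]
    rw [h2]
    have : r + j - m + m - r = j := by omega
    rw [this, Nat.mod_eq_of_lt hj]

lemma modShift2 (m a : ℕ) (hm : 0 < m) :
    ∀ x < m, (a + (x + m - a % m) % m) % m = x := by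
  intro x hx
  have hr : a % m < m := Nat.mod_lt _ hm
  rw [Nat.add_mod a, Nat.mod_mod_of_dvd _ dvd_rfl, Nat.add_mod_mod]
  have h1 : a % m + (x + m - a % m) = x + m := by omega
  rw [h1, Nat.add_mod_right, Nat.mod_eq_of_lt hx]

lemma sumLev (m a : ℕ) (hm : 1 ≤ m) (f : ℕ → ℕ) :
    ∑ j ∈ range m, f ((m - 1) - ((a + j) % m)) = ∑ l ∈ range m, f l := by
  refine Finset.sum_nbij' (i := fun j => (m - 1) - ((a + j) % m))
    (j := fun l => ((m - 1 - l) + m - a % m) % m) ?_ ?_ ?_ ?_ ?_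
  · intro j hj
    simp only [mem_range] at *
    omega
  · intro l hl
    simp only [mem_range] at *
    exact Nat.mod_lt _ (by omega)
  · intro j hj
    simp only [mem_range] at hj
    have h1 : (a + j) % m < m := Nat.mod_lt _ (by omega)
    show (m - 1 - (m - 1 - (a + j) % m) + m - a % m) % m = j
    have h2 : m - 1 - (m - 1 - (a + j) % m) = (a + j) % m := by omega
    rw [h2]
    exact modShift m a (by omega) j hj
  · intro l hl
    simp only [mem_range] at hl
    have hx : m - 1 - l < m := by omega
    show m - 1 - (a + (m - 1 - l + m - a % m) % m) % m = l
    rw [modShift2 m a (by omega) (m - 1 - l) hx]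
    omega
  · intro j hj; rfl

/-- The level of the `j`-th node on the walk starting at residue `a`. -/
def clev (m a j : ℕ) : ℕ := (m - 1) - ((a + j) % m)

/-- The digit used at step `j`. -/
def cdig (κ m a q j : ℕ) : ℕ := if j < m then q / κ ^ clev m a j % κ else 0

/-- The offset used at step `j`. -/
def coff (κ m a q j : ℕ) : ℕ := 1 + cdig κ m a q j * m * κ ^ clev m a j

/-- Total offset after `L` steps. -/
def cS (κ m a q L : ℕ) : ℕ := ∑ j ∈ range L, coff κ m a q j

/-- Total digit contribution after `L` steps. -/
def cT (κ m a q L : ℕ) : ℕ := ∑ j ∈ range L, cdig κ m a q j * κ ^ clev m a j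

lemma cS_eq (κ m a q L : ℕ) : cS κ m a q L = L + m * cT κ m a q L := by
  unfold cS cT coff
  rw [Finset.sum_add_distrib, Finset.mul_sum]
  congr 1
  · simp
  · refine Finset.sum_congr rfl fun j _ => ?_
    ring

lemma cT_eq (κ m a q L : ℕ) (hm : 1 ≤ m) (hq : q < κ ^ m) (hL : m ≤ L) :
    cT κ m a q L = q := by
  have h1 : cT κ m a q L = cT κ m a q m := by
    unfold cT
    refine (Finset.sum_subset (Finset.range_subset_range.2 hL) ?_).symm
    intro x _ hxm
    simp only [mem_range, not_lt] at hxm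
    unfold cdig
    rw [if_neg (by omega)]
    ring
  rw [h1]
  unfold cT cdig
  have h2 : ∑ j ∈ range m, (if j < m then q / κ ^ clev m a j % κ else 0) * κ ^ clev m a j
      = ∑ j ∈ range m, (q / κ ^ (clev m a j) % κ) * κ ^ (clev m a j) := by
    refine Finset.sum_congr rfl fun j hj => ?_
    rw [if_pos (mem_range.mp hj)]
  rw [h2]
  unfold clev
  rw [sumLev m a hm (fun l => (q / κ ^ l % κ) * κ ^ l), digitSum κ m q, Nat.mod_eq_of_lt hq]

/-- In `B_clockwise(κ, m)`, for every ordered pair of nodes `(s, t)` there is a directed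
path from `s` to `t` of length at most `2m - 1`. -/
theorem clockwise_diameter (κ m : ℕ) (hκ : 1 ≤ κ) (hm : 1 ≤ m)
    (s t : Fin (κ ^ m * m)) :
    ∃ L ≤ 2 * m - 1, ∃ w : ℕ → Fin (κ ^ m * m),
      w 0 = s ∧ w L = t ∧ ∀ j < L, clockEdge κ m (w j) (w (j + 1)) := by
  have hκm : 1 ≤ κ ^ m := Nat.one_le_pow _ _ hκ
  have hn : 0 < κ ^ m * m := Nat.mul_pos hκm hm
  have hmn : m ≤ κ ^ m * m := by
    calc m = 1 * m := (one_mul m).symm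
    _ ≤ κ ^ m * m := Nat.mul_le_mul_right m hκm
  have hmdvdn : m ∣ κ ^ m * m := ⟨κ ^ m, Nat.mul_comm _ _⟩
  set a := (s : ℕ) with ha_def
  set d := clockDelta (κ ^ m * m) s t with hd_def
  have hdlt : d < κ ^ m * m := Nat.mod_lt _ hn
  by_cases hd0 : d = 0
  · -- s = t
    have hst : s = t := by
      have h1 : κ ^ m * m ∣ ((t : ℕ) + κ ^ m * m - (s : ℕ)) := Nat.dvd_of_mod_eq_zero hd0
      have hs : (s : ℕ) < κ ^ m * m := s.isLt
      have ht : (t : ℕ) < κ ^ m * m := t.isLt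
      obtain ⟨k, hk⟩ := h1
      have hkpos : 0 < k := by
        rcases Nat.eq_zero_or_pos k with rfl | h
        · simp only [Nat.mul_zero] at hk; omega
        · exact h
      have hklt : k < 2 := by
        refine Nat.lt_of_mul_lt_mul_left (a := κ ^ m * m) ?_
        calc κ ^ m * m * k = (t : ℕ) + κ ^ m * m - (s : ℕ) := hk.symm
        _ < κ ^ m * m * 2 := by omega
      have hk1 : k = 1 := by omega
      subst hk1
      rw [Nat.mul_one] at hk
      exact Fin.ext (by omega)
    exact ⟨0, by omega, fun _ => s, rfl, by rw [hst], fun j hj => absurd hj (by omega)⟩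
  · -- main case
    have hr : d % m < m := Nat.mod_lt _ hm
    set L := m + d % m with hL_def
    have hLd : L ≤ d + κ ^ m * m := by
      have : d % m ≤ d := Nat.mod_le _ _
      omega
    have hdvd1 : m ∣ (d + κ ^ m * m - L) := by
      have h1 : d + κ ^ m * m - L = (d - d % m) + (κ ^ m * m - m) := by
        have := Nat.mod_le d m
        omega
      rw [h1]
      exact Nat.dvd_add (Nat.dvd_sub_mod d) (Nat.dvd_sub hmdvdn dvd_rfl)
    have hdvd2 : m ∣ (d + κ ^ m * m - L) % (κ ^ m * m) := (Nat.dvd_mod_iff hmdvdn).mpr hdvd1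
    set q := (d + κ ^ m * m - L) % (κ ^ m * m) / m with hq_def
    have hmq : m * q = (d + κ ^ m * m - L) % (κ ^ m * m) := Nat.mul_div_cancel' hdvd2
    have hq : q < κ ^ m := by
      have h2 : m * q < m * κ ^ m := by
        rw [hmq]
        calc (d + κ ^ m * m - L) % (κ ^ m * m) < κ ^ m * m := Nat.mod_lt _ hn
        _ = m * κ ^ m := Nat.mul_comm _ _
      exact Nat.lt_of_mul_lt_mul_left h2
    refine ⟨L, by omega, fun j => ⟨(a + cS κ m a q j) % (κ ^ m * m), Nat.mod_lt _ hn⟩, ?_, ?_, ?_⟩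
    · apply Fin.ext
      show (a + cS κ m a q 0) % (κ ^ m * m) = a
      unfold cS
      rw [Finset.range_zero, Finset.sum_empty, Nat.add_zero, Nat.mod_eq_of_lt s.isLt]
    · apply Fin.ext
      show (a + cS κ m a q L) % (κ ^ m * m) = (t : ℕ)
      rw [cS_eq, cT_eq κ m a q L hm hq (by omega), hmq, ← Nat.add_assoc, Nat.add_mod_mod]
      have h2 : a + L + (d + κ ^ m * m - L) = a + d + κ ^ m * m := by omega
      rw [h2, Nat.add_mod_right]
      have h3 : (a + d) % (κ ^ m * m) = (a + ((t : ℕ) + κ ^ m * m - a)) % (κ ^ m * m) := by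
        rw [hd_def]
        show (a + ((t:ℕ) + κ ^ m * m - (s:ℕ)) % (κ ^ m * m)) % (κ ^ m * m) = _
        rw [Nat.add_mod_mod]
      rw [h3]
      have h4 : a + ((t : ℕ) + κ ^ m * m - a) = (t : ℕ) + κ ^ m * m := by
        have := s.isLt
        omega
      rw [h4, Nat.add_mod_right, Nat.mod_eq_of_lt t.isLt]
    · intro j hj
      refine ⟨cdig κ m a q j, ?_, ?_⟩
      · unfold cdig
        split
        · exact Nat.mod_lt _ (by omega)
        · omega
      · show (a + cS κ m a q (j+1)) % (κ ^ m * m)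
          = ((a + cS κ m a q j) % (κ ^ m * m) + (1 + cdig κ m a q j * m * κ ^
              clockLevel m (⟨(a + cS κ m a q j) % (κ ^ m * m), Nat.mod_lt _ hn⟩ :
                Fin (κ ^ m * m)))) % (κ ^ m * m)
        have hlev : clockLevel m (⟨(a + cS κ m a q j) % (κ ^ m * m), Nat.mod_lt _ hn⟩ :
            Fin (κ ^ m * m)) = clev m a j := by
          unfold clockLevel clev
          congr 1
          show (a + cS κ m a q j) % (κ ^ m * m) % m = (a + j) % m
          rw [Nat.mod_mod_of_dvd _ hmdvdn, cS_eq, ← Nat.add_assoc,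
            Nat.add_mul_mod_self_left]
        rw [hlev]
        have hcoff : 1 + cdig κ m a q j * m * κ ^ clev m a j = coff κ m a q j := rfl
        rw [hcoff, Nat.mod_add_mod]
        congr 1
        have hs : cS κ m a q (j+1) = cS κ m a q j + coff κ m a q j :=
          Finset.sum_range_succ _ _
        rw [hs]
        omega
end

section
/- In the network B_clockwise(κ,m), the average over all ordered pairs (s,t) of nodes of the length of the shortest directed path from s to t is at most 1.5m. -/
/-- Auxiliary walk for routing: first take the short link while `j < r`, afterwards use
link `x (level)` at each step. -/
def pwalk (κ m r : ℕ) (x : ℕ → ℕ) (s : Fin (κ ^ m * m)) : ℕ → Fin (κ ^ m * m)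
  | 0 => s
  | j + 1 =>
    let u := pwalk κ m r x s j
    ⟨((u : ℕ) + (1 + (if j < r then 0 else x (clockLevel m u)) * m
        * κ ^ clockLevel m u)) % (κ ^ m * m),
      Nat.mod_lt _ (Nat.lt_of_le_of_lt (Nat.zero_le _) s.isLt)⟩

private lemma sum_mod_range (m K : ℕ) (hm : 0 < m) :
    ∑ d ∈ Finset.range (K * m), d % m = K * ∑ i ∈ Finset.range m, i := by
  induction K with
  | zero => simp
  | succ K ih =>
    have h : (K + 1) * m = K * m + m := by ring
    rw [h]
    rw [Finset.range_eq_Ico, ← Finset.sum_Ico_consecutive _ (Nat.zero_le (K * m))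
      (Nat.le_add_right _ _), ← Finset.range_eq_Ico, ih, Finset.sum_Ico_eq_sum_range]
    have h2 : ∀ k ∈ Finset.range (K * m + m - K * m), (K * m + k) % m = k := by
      intro k hk
      simp only [Finset.mem_range] at hk
      rw [Nat.mul_comm K m, Nat.mul_add_mod, Nat.mod_eq_of_lt]
      omega
    rw [Finset.sum_congr rfl h2]
    have h3 : K * m + m - K * m = m := by omega
    rw [h3]; ring

private lemma digit_sum (κ : ℕ) (hκ : 0 < κ) (m X : ℕ) :
    ∑ ℓ ∈ Finset.range m, X / κ ^ ℓ % κ * κ ^ ℓ = X % κ ^ m := by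
  induction m with
  | zero => simp [Nat.mod_one]
  | succ m ih =>
    rw [Finset.sum_range_succ, ih, pow_succ, Nat.mod_mul]
    ring

private lemma sum_level (m : ℕ) (hm : 0 < m) (c : ℕ) (f : ℕ → ℕ) :
    ∑ k ∈ Finset.range m, f (m - 1 - (c + k) % m) = ∑ ℓ ∈ Finset.range m, f ℓ := by
  refine Finset.sum_nbij' (fun k => m - 1 - (c + k) % m)
    (fun ℓ => (m - 1 - ℓ + (m - c % m)) % m) ?_ ?_ ?_ ?_ ?_
  · intro k _
    simp only [Finset.mem_range]
    have := Nat.mod_lt (c + k) hm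
    omega
  · intro ℓ _
    simp only [Finset.mem_range]
    exact Nat.mod_lt _ hm
  · intro k hk
    simp only [Finset.mem_range] at hk
    have h1 : (c + k) % m < m := Nat.mod_lt _ hm
    have h2 : m - 1 - (m - 1 - (c + k) % m) = (c + k) % m := by omega
    rw [h2, Nat.mod_add_mod]
    have hd := Nat.div_add_mod c m
    have hc : c % m < m := Nat.mod_lt _ hm
    have h4 : c + k + (m - c % m) = m * (c / m) + m + k := by omega
    rw [h4, show m * (c / m) + m + k = m * (c / m + 1) + k from by ring,
      Nat.mul_add_mod, Nat.mod_eq_of_lt hk]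
  · intro ℓ hℓ
    simp only [Finset.mem_range] at hℓ
    have hc : c % m < m := Nat.mod_lt _ hm
    have h1 : (c + (m - 1 - ℓ + (m - c % m)) % m) % m = m - 1 - ℓ := by
      rw [Nat.add_mod_mod]
      have hd := Nat.div_add_mod c m
      have h4 : c + (m - 1 - ℓ + (m - c % m)) = m * (c / m) + m + (m - 1 - ℓ) := by omega
      rw [h4, show m * (c / m) + m + (m - 1 - ℓ) = m * (c / m + 1) + (m - 1 - ℓ) from by ring,
        Nat.mul_add_mod, Nat.mod_eq_of_lt (by omega)]
    rw [h1]; omega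
  · intro k _; rfl

section WalkFacts

variable (κ m : ℕ)

private lemma pwalk_val (hκ : 0 < κ) (hm : 0 < m) (r : ℕ) (x : ℕ → ℕ)
    (s : Fin (κ ^ m * m)) (j : ℕ) :
    (pwalk κ m r x s j : ℕ) =
      ((s : ℕ) + j + m * ∑ k ∈ Finset.range j,
        (if k < r then 0 else
          x (m - 1 - ((s : ℕ) + k) % m) * κ ^ (m - 1 - ((s : ℕ) + k) % m)))
        % (κ ^ m * m) := by
  have hN : 0 < κ ^ m * m := Nat.mul_pos (Nat.pow_pos hκ) hm
  have hdvd : m ∣ κ ^ m * m := dvd_mul_left m (κ ^ m)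
  induction j with
  | zero => simp [pwalk, Nat.mod_eq_of_lt s.isLt]
  | succ j ih =>
    have hlev : clockLevel m (pwalk κ m r x s j) = m - 1 - ((s : ℕ) + j) % m := by
      unfold clockLevel
      rw [ih, Nat.mod_mod_of_dvd _ hdvd, Nat.add_mul_mod_self_left]
    show ((pwalk κ m r x s j : ℕ) + (1 + (if j < r then 0 else
        x (clockLevel m (pwalk κ m r x s j))) * m
        * κ ^ clockLevel m (pwalk κ m r x s j))) % (κ ^ m * m) = _
    rw [hlev, ih, Nat.mod_add_mod, Finset.sum_range_succ]
    congr 1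
    split_ifs <;> ring

private lemma pwalk_edge (hκ : 0 < κ) (r : ℕ) (x : ℕ → ℕ) (hx : ∀ ℓ, x ℓ < κ)
    (s : Fin (κ ^ m * m)) (j : ℕ) :
    clockEdge κ m (pwalk κ m r x s j) (pwalk κ m r x s (j + 1)) := by
  refine ⟨(if j < r then 0 else x (clockLevel m (pwalk κ m r x s j))), ?_, rfl⟩
  split_ifs
  · exact hκ
  · exact hx _

end WalkFacts

private lemma clock_dist_le (κ m : ℕ) (hκ : 1 ≤ κ) (hm : 1 ≤ m)
    (s t : Fin (κ ^ m * m)) :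
    sInf {L : ℕ | ∃ w : ℕ → Fin (κ ^ m * m),
        w 0 = s ∧ w L = t ∧ ∀ j < L, clockEdge κ m (w j) (w (j + 1))} ≤
      clockDelta (κ ^ m * m) s t % m + m := by
  have hκ0 : 0 < κ := hκ
  have hm0 : 0 < m := hm
  have hK : 0 < κ ^ m := Nat.pow_pos hκ0
  have hN : 0 < κ ^ m * m := Nat.mul_pos hK hm0
  set d := clockDelta (κ ^ m * m) s t with hd
  set q := d / m with hq
  set r := d % m with hr
  set X := (q + κ ^ m - 1) % κ ^ m with hX
  have hXlt : X < κ ^ m := Nat.mod_lt _ hK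
  have hdlt : d < κ ^ m * m := Nat.mod_lt _ hN
  have hqlt : q < κ ^ m := by
    rw [hq]
    rw [Nat.div_lt_iff_lt_mul hm0]
    exact hdlt
  set x : ℕ → ℕ := fun ℓ => X / κ ^ ℓ % κ with hxdef
  have hx : ∀ ℓ, x ℓ < κ := fun ℓ => Nat.mod_lt _ hκ0
  apply Nat.sInf_le
  refine ⟨pwalk κ m r x s, rfl, ?_, fun j _ => pwalk_edge κ m hκ0 r x hx s j⟩
  -- final node computation
  apply Fin.ext
  rw [pwalk_val κ m hκ0 hm0 r x s (r + m)]
  -- compute the digit sum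
  have hrm : r < m := Nat.mod_lt _ hm0
  have hsum : ∑ k ∈ Finset.range (r + m),
      (if k < r then 0 else
        x (m - 1 - ((s : ℕ) + k) % m) * κ ^ (m - 1 - ((s : ℕ) + k) % m)) = X := by
    rw [Finset.range_eq_Ico,
      ← Finset.sum_Ico_consecutive _ (Nat.zero_le r) (Nat.le_add_right r m)]
    have h1 : ∑ k ∈ Finset.Ico 0 r,
        (if k < r then 0 else
          x (m - 1 - ((s : ℕ) + k) % m) * κ ^ (m - 1 - ((s : ℕ) + k) % m)) = 0 := by
      apply Finset.sum_eq_zero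
      intro k hk
      simp only [Finset.mem_Ico] at hk
      simp [hk.2]
    have h2 : ∑ k ∈ Finset.Ico r (r + m),
        (if k < r then 0 else
          x (m - 1 - ((s : ℕ) + k) % m) * κ ^ (m - 1 - ((s : ℕ) + k) % m)) =
        ∑ k ∈ Finset.Ico r (r + m),
          x (m - 1 - ((s : ℕ) + k) % m) * κ ^ (m - 1 - ((s : ℕ) + k) % m) := by
      apply Finset.sum_congr rfl
      intro k hk
      simp only [Finset.mem_Ico] at hk
      simp [Nat.not_lt.mpr hk.1]
    rw [h1, h2, zero_add, Finset.sum_Ico_eq_sum_range]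
    have h3 : r + m - r = m := by omega
    rw [h3]
    have h4 : ∀ k, (s : ℕ) + (r + k) = ((s : ℕ) + r) + k := fun k => by ring
    calc ∑ k ∈ Finset.range m,
          x (m - 1 - ((s : ℕ) + (r + k)) % m) * κ ^ (m - 1 - ((s : ℕ) + (r + k)) % m)
        = ∑ k ∈ Finset.range m,
          (fun ℓ => x ℓ * κ ^ ℓ) (m - 1 - (((s : ℕ) + r) + k) % m) := by
          apply Finset.sum_congr rfl; intro k _; rw [h4]
      _ = ∑ ℓ ∈ Finset.range m, x ℓ * κ ^ ℓ :=
          sum_level m hm0 ((s : ℕ) + r) (fun ℓ => x ℓ * κ ^ ℓ)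
      _ = X % κ ^ m := digit_sum κ hκ0 m X
      _ = X := Nat.mod_eq_of_lt hXlt
  rw [hsum]
  have hdq : m * q + r = d := by rw [hq, hr]; exact Nat.div_add_mod d m
  clear_value x X r q d
  -- now show ((s : ℕ) + (r + m) + m * X) % N = t
  have hmod : (1 + X) % κ ^ m = q % κ ^ m := by
    rw [hX, Nat.add_mod_mod]
    have h6 : 1 + (q + κ ^ m - 1) = q + κ ^ m := by omega
    rw [h6, Nat.add_mod_right]
  have hmeq : m * (1 + X) ≡ m * q [MOD m * κ ^ m] :=
    Nat.ModEq.mul_left' _ hmod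
  have hmeq2 : (s : ℕ) + r + m * (1 + X) ≡ (s : ℕ) + r + m * q [MOD κ ^ m * m] := by
    rw [mul_comm m (κ ^ m)] at hmeq
    exact hmeq.add_left _
  have hfin : ((s : ℕ) + (r + m) + m * X) % (κ ^ m * m)
      = ((s : ℕ) + r + m * q) % (κ ^ m * m) := by
    have h7 : (s : ℕ) + (r + m) + m * X = (s : ℕ) + r + m * (1 + X) := by ring
    rw [h7]
    exact hmeq2
  rw [hfin]
  have h8 : (s : ℕ) + r + m * q = (s : ℕ) + d := by omega
  rw [h8]
  -- (s + d) % N = t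
  rw [hd]
  unfold clockDelta
  rw [Nat.add_mod_mod]
  have h9 : (s : ℕ) + ((t : ℕ) + κ ^ m * m - (s : ℕ)) = (t : ℕ) + κ ^ m * m := by
    have := s.isLt; omega
  rw [h9, Nat.add_mod_right, Nat.mod_eq_of_lt t.isLt]

private lemma sum_delta (N : ℕ) (hN : 0 < N) (s : Fin N) (F : ℕ → ℕ) :
    ∑ t : Fin N, F (clockDelta N s t) = ∑ d ∈ Finset.range N, F d := by
  have h : ∑ t : Fin N, F (clockDelta N s t)
      = ∑ t ∈ Finset.range N, F ((t + N - (s : ℕ)) % N) := by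
    rw [← Fin.sum_univ_eq_sum_range (fun t => F ((t + N - (s : ℕ)) % N)) N]
    rfl
  rw [h]
  refine Finset.sum_nbij' (fun t => (t + N - (s : ℕ)) % N)
    (fun d => (d + (s : ℕ)) % N) ?_ ?_ ?_ ?_ ?_
  · intro a _; exact Finset.mem_range.mpr (Nat.mod_lt _ hN)
  · intro a _; exact Finset.mem_range.mpr (Nat.mod_lt _ hN)
  · intro a ha
    simp only [Finset.mem_range] at ha
    rw [Nat.mod_add_mod]
    have hs := s.isLt
    have : a + N - (s : ℕ) + (s : ℕ) = a + N := by omega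
    rw [this, Nat.add_mod_right, Nat.mod_eq_of_lt ha]
  · intro a ha
    simp only [Finset.mem_range] at ha
    have hs := s.isLt
    have h1 : (a + (s : ℕ)) % N + N - (s : ℕ) = (a + (s : ℕ)) % N + (N - (s : ℕ)) := by
      omega
    rw [h1, Nat.mod_add_mod]
    have h2 : a + (s : ℕ) + (N - (s : ℕ)) = a + N := by omega
    rw [h2, Nat.add_mod_right, Nat.mod_eq_of_lt ha]
  · intro a _; rfl

/-- In `B_clockwise(κ, m)`, the average over all ordered pairs `(s, t)` of the length of
the shortest directed path from `s` to `t` is at most `1.5 m`. -/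
theorem clockwise_average_shortest_path (κ m : ℕ) (hκ : 1 ≤ κ) (hm : 1 ≤ m) :
    (∑ s : Fin (κ ^ m * m), ∑ t : Fin (κ ^ m * m),
        ((sInf {L : ℕ | ∃ w : ℕ → Fin (κ ^ m * m),
          w 0 = s ∧ w L = t ∧ ∀ j < L, clockEdge κ m (w j) (w (j + 1))} : ℕ) : ℝ)) /
      ((κ ^ m * m : ℕ) : ℝ) ^ 2 ≤ (3 / 2 : ℝ) * m := by
  have hκ0 : 0 < κ := hκ
  have hm0 : 0 < m := hm
  have hK : 0 < κ ^ m := Nat.pow_pos hκ0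
  have hN : 0 < κ ^ m * m := Nat.mul_pos hK hm0
  set N := κ ^ m * m with hNdef
  set G := ∑ i ∈ Finset.range m, i with hG
  -- bound the double sum by a natural number
  have key : ∀ s t : Fin N,
      sInf {L : ℕ | ∃ w : ℕ → Fin N,
        w 0 = s ∧ w L = t ∧ ∀ j < L, clockEdge κ m (w j) (w (j + 1))} ≤
      clockDelta N s t % m + m := clock_dist_le κ m hκ hm
  have inner : ∀ s : Fin N,
      ∑ t : Fin N, (clockDelta N s t % m + m) = κ ^ m * G + N * m := by
    intro s
    rw [sum_delta N hN s (fun d => d % m + m), Finset.sum_add_distrib,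
      Finset.sum_const, Finset.card_range, smul_eq_mul, sum_mod_range m (κ ^ m) hm0]
  -- total bound in ℕ
  have total : (∑ s : Fin N, ∑ t : Fin N,
      sInf {L : ℕ | ∃ w : ℕ → Fin N,
        w 0 = s ∧ w L = t ∧ ∀ j < L, clockEdge κ m (w j) (w (j + 1))}) ≤
      N * (κ ^ m * G + N * m) := by
    calc (∑ s : Fin N, ∑ t : Fin N, sInf _)
        ≤ ∑ s : Fin N, ∑ t : Fin N, (clockDelta N s t % m + m) := by
          apply Finset.sum_le_sum; intro s _
          apply Finset.sum_le_sum; intro t _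
          exact key s t
      _ = ∑ s : Fin N, (κ ^ m * G + N * m) := by
          apply Finset.sum_congr rfl; intro s _; exact inner s
      _ = N * (κ ^ m * G + N * m) := by
          rw [Finset.sum_const, Finset.card_univ, Fintype.card_fin, smul_eq_mul]
  -- move to ℝ
  have hNR : (0 : ℝ) < (N : ℝ) := by exact_mod_cast hN
  rw [div_le_iff₀ (by positivity)]
  have cast_total : (∑ s : Fin N, ∑ t : Fin N,
      ((sInf {L : ℕ | ∃ w : ℕ → Fin N,
        w 0 = s ∧ w L = t ∧ ∀ j < L, clockEdge κ m (w j) (w (j + 1))} : ℕ) : ℝ)) ≤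
      ((N * (κ ^ m * G + N * m) : ℕ) : ℝ) := by
    refine le_trans (le_of_eq ?_) ((Nat.cast_le (α := ℝ)).mpr total)
    push_cast
    rfl
  refine le_trans cast_total ?_
  -- final arithmetic
  have hGbound : (2 * (κ ^ m * G) : ℝ) ≤ (N : ℝ) * m := by
    have h2G : (G : ℕ) * 2 = m * (m - 1) := Finset.sum_range_id_mul_two m
    have hn : (κ ^ m * G * 2 : ℕ) ≤ κ ^ m * m * m := by
      calc κ ^ m * G * 2 = κ ^ m * (G * 2) := by ring
        _ = κ ^ m * (m * (m - 1)) := by rw [h2G]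
        _ ≤ κ ^ m * (m * m) :=
            Nat.mul_le_mul_left _ (Nat.mul_le_mul_left _ (Nat.sub_le m 1))
        _ = κ ^ m * m * m := by ring
    have := hn
    have hcast : ((κ ^ m * G * 2 : ℕ) : ℝ) ≤ ((κ ^ m * m * m : ℕ) : ℝ) := by
      exact_mod_cast hn
    push_cast at hcast ⊢
    rw [hNdef]
    push_cast
    linarith
  have expand : ((N * (κ ^ m * G + N * m) : ℕ) : ℝ)
      = (N : ℝ) * (κ ^ m * G : ℕ) + (N : ℝ) ^ 2 * m := by
    push_cast; ring
  rw [expand]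
  have h1 : (N : ℝ) * ((κ ^ m * G : ℕ) : ℝ) ≤ (N : ℝ) * ((N : ℝ) * m / 2) := by
    apply mul_le_mul_of_nonneg_left _ (le_of_lt hNR)
    have : ((κ ^ m * G : ℕ) : ℝ) = (κ ^ m : ℝ) * G := by push_cast; ring
    rw [this]
    nlinarith [hGbound]
  calc (N : ℝ) * ((κ ^ m * G : ℕ) : ℝ) + (N : ℝ) ^ 2 * m
      ≤ (N : ℝ) * ((N : ℝ) * m / 2) + (N : ℝ) ^ 2 * m := by linarith
    _ = (3 / 2 : ℝ) * m * ((N : ℝ)) ^ 2 := by ring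
    _ = (3 / 2 : ℝ) * m * (((N : ℕ) : ℝ)) ^ 2 := by norm_num
end

section
/- In the network B_absolute(k,m), for every ordered pair of nodes (s,t) there exists a directed path from s to t of length at most 2m−1 that, moreover, does not use any back edge (any edge with offset x = −m+1); in particular the directed diameter of B_absolute(k,m) is at most 2m−1. -/
/-- Number of nodes of the Papillon network `B_absolute(k, m)`. -/
def absN (k m : ℕ) : ℕ := (2 * k + 1) ^ m * m

/-- The absolute distance `min((v - u) mod n, (u - v) mod n)` on a ring of `n` nodes. -/
def absDelta (n : ℕ) (u v : Fin n) : ℕ :=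
  min (((v : ℕ) + n - (u : ℕ)) % n) (((u : ℕ) + n - (v : ℕ)) % n)

/-- The level `ℓ(u) = (m-1) - (u mod m)` of a node. -/
def absLevel (m : ℕ) {n : ℕ} (u : Fin n) : ℕ := (m - 1) - ((u : ℕ) % m)

/-- The `2k+1` "forward" links of `B_absolute(k, m)`: `u` links to `(u + x) mod n` for
`x ∈ {1 + i·m·(2k+1)^{ℓ(u)} : -k ≤ i ≤ k}`. -/
def absForwardEdge (k m : ℕ) (u v : Fin (absN k m)) : Prop :=
  ∃ i : ℤ, -(k : ℤ) ≤ i ∧ i ≤ (k : ℤ) ∧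
    ((v : ℕ) : ℤ) =
      (((u : ℕ) : ℤ) + (1 + i * (m : ℤ) * ((2 * (k : ℤ) + 1)) ^ absLevel m u)) %
        ((absN k m : ℕ) : ℤ)

/-- The "back edge" of `B_absolute(k, m)`: `u` links to `(u + x) mod n` for `x = -m + 1`. -/
def absBackEdge (k m : ℕ) (u v : Fin (absN k m)) : Prop :=
  ((v : ℕ) : ℤ) = (((u : ℕ) : ℤ) + (1 - (m : ℤ))) % ((absN k m : ℕ) : ℤ)

/-- The directed edges of `B_absolute(k, m)`. -/
def absEdge (k m : ℕ) (u v : Fin (absN k m)) : Prop :=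
  absForwardEdge k m u v ∨ absBackEdge k m u v

/-- `v` is a greedy next hop from `u` towards target `t` with respect to `δ_absolute`:
`v` is a neighbor of `u` minimizing the absolute distance to `t` among `u`'s neighbors. -/
def absGreedyStep (k m : ℕ) (t u v : Fin (absN k m)) : Prop :=
  absEdge k m u v ∧ ∀ v', absEdge k m u v' →
    absDelta (absN k m) v t ≤ absDelta (absN k m) v' t

/-- Balanced base-(2k+1) representation modulo (2k+1)^m. -/
lemma balanced_rep (k : ℕ) (m : ℕ) (D : ℤ) :
    ∃ d : ℕ → ℤ, (∀ ℓ, -(k : ℤ) ≤ d ℓ ∧ d ℓ ≤ k) ∧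
      ((2 * (k : ℤ) + 1)) ^ m ∣ (∑ ℓ ∈ Finset.range m, d ℓ * (2 * (k : ℤ) + 1) ^ ℓ) - D := by
  induction m generalizing D with
  | zero =>
    exact ⟨fun _ => 0, fun ℓ => ⟨by simp, by simp⟩, by simp⟩
  | succ m ih =>
    set q : ℤ := 2 * (k : ℤ) + 1 with hq
    have hq0 : (0:ℤ) < q := by positivity
    set c : ℤ := Int.bmod D (2 * k + 1) with hc
    have hqc : ((2 * k + 1 : ℕ) : ℤ) = q := by push_cast; ring
    have h1 : 0 ≤ D % q := Int.emod_nonneg D (by omega)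
    have h2 : D % q < q := Int.emod_lt_of_pos D hq0
    have hbd : -(k:ℤ) ≤ c ∧ c ≤ k := by
      rw [hc, Int.bmod_def, hqc]
      split <;> omega
    have hdvd : q ∣ D - c := by
      have h3 : q * (D / q) = D - D % q := by
        have := Int.mul_ediv_add_emod D q; omega
      rw [hc, Int.bmod_def, hqc]
      split
      · exact ⟨D / q, by omega⟩
      · exact ⟨D / q + 1, by rw [mul_add, h3]; ring⟩
    obtain ⟨D', hD'⟩ := hdvd
    obtain ⟨d, hdbd, hdvd'⟩ := ih D'
    refine ⟨fun ℓ => if ℓ = 0 then c else d (ℓ - 1), fun ℓ => ?_, ?_⟩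
    · dsimp only
      split
      · exact hbd
      · exact hdbd _
    rw [Finset.sum_range_succ']
    simp only [Nat.add_sub_cancel, Nat.succ_ne_zero, if_false, if_true, pow_zero, mul_one]
    have hsum : ∑ i ∈ Finset.range m, d i * q ^ (i + 1)
        = q * ∑ i ∈ Finset.range m, d i * q ^ i := by
      rw [Finset.mul_sum]; congr 1; ext i; ring
    rw [hsum]
    obtain ⟨E, hE⟩ := hdvd'
    exact ⟨E, by linear_combination q * hE - hD'⟩

/-- The level map `j ↦ (m-1) - ((s+j) % m)` permutes `range m`. -/
lemma level_sum (m s : ℕ) (hm : 1 ≤ m) (g : ℕ → ℤ) :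
    ∑ j ∈ Finset.range m, g ((m - 1) - ((s + j) % m)) = ∑ ℓ ∈ Finset.range m, g ℓ := by
  set f : ℕ → ℕ := fun j => (m - 1) - ((s + j) % m) with hf
  have hinj : ∀ x ∈ Finset.range m, ∀ y ∈ Finset.range m, f x = f y → x = y := by
    intro x hx y hy hxy
    simp only [Finset.mem_range] at hx hy
    have hx' : (s + x) % m < m := Nat.mod_lt _ (by omega)
    have hy' : (s + y) % m < m := Nat.mod_lt _ (by omega)
    have hmm : (s + x) % m = (s + y) % m := by
      simp only [hf] at hxy; omega
    have h2 : x % m = y % m := Nat.ModEq.add_left_cancel' s hmm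
    rwa [Nat.mod_eq_of_lt hx, Nat.mod_eq_of_lt hy] at h2
  have himg : Finset.image f (Finset.range m) = Finset.range m := by
    apply Finset.eq_of_subset_of_card_le
    · intro x hx
      simp only [Finset.mem_image, Finset.mem_range] at hx ⊢
      obtain ⟨j, _, hj⟩ := hx
      simp only [hf] at hj; omega
    · rw [Finset.card_image_of_injOn (fun x hx y hy => hinj x hx y hy)]
  conv_rhs => rw [← himg]
  rw [Finset.sum_image hinj]

/-- In `B_absolute(k, m)`, for every ordered pair of nodes `(s, t)` there is a directed
path from `s` to `t` of length at most `2m - 1` that uses no back edge (hence in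
particular the directed diameter is at most `2m - 1`). -/
theorem absolute_diameter_no_back_edges (k m : ℕ) (hk : 1 ≤ k) (hm : 1 ≤ m)
    (s t : Fin (absN k m)) :
    ∃ L ≤ 2 * m - 1, ∃ w : ℕ → Fin (absN k m),
      w 0 = s ∧ w L = t ∧ ∀ j < L, absForwardEdge k m (w j) (w (j + 1)) := by
  set q : ℤ := 2 * (k : ℤ) + 1 with hq
  have hq0 : (0:ℤ) < q := by positivity
  have hn0 : 0 < absN k m := by rw [absN]; positivity
  have hnz : ((absN k m : ℕ) : ℤ) = q ^ m * m := by rw [absN]; push_cast; ring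
  have hnZ0 : (0:ℤ) < (absN k m : ℤ) := by exact_mod_cast hn0
  have hmn : (m : ℤ) ∣ ((absN k m : ℕ) : ℤ) := ⟨q ^ m, by rw [hnz]; ring⟩
  have hm0 : (0:ℤ) < m := by exact_mod_cast hm
  -- choose L
  set rZ : ℤ := (((t : ℕ) : ℤ) - ((s : ℕ) : ℤ)) % m with hrZ
  have hr0 : 0 ≤ rZ := Int.emod_nonneg _ (by omega)
  have hr1 : rZ < m := Int.emod_lt_of_pos _ hm0
  set L : ℕ := m + rZ.toNat with hL
  have hLZ : (L : ℤ) = m + rZ := by rw [hL]; push_cast; omega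
  have hLle : L ≤ 2 * m - 1 := by omega
  -- the displacement to realize, divided by m
  have hdvdD : (m : ℤ) ∣ ((t : ℕ) : ℤ) - ((s : ℕ) : ℤ) - L := by
    have h3 : (m:ℤ) * ((((t : ℕ) : ℤ) - ((s : ℕ) : ℤ)) / m)
        = (((t : ℕ) : ℤ) - ((s : ℕ) : ℤ)) - rZ := by
      have := Int.mul_ediv_add_emod (((t : ℕ) : ℤ) - ((s : ℕ) : ℤ)) m; omega
    exact ⟨(((t : ℕ) : ℤ) - ((s : ℕ) : ℤ)) / m - 1, by rw [hLZ, mul_sub, h3]; ring⟩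
  obtain ⟨D, hD⟩ := hdvdD
  obtain ⟨d, hdbd, hdvd⟩ := balanced_rep k m D
  -- the walk
  set lev : ℕ → ℕ := fun j => (m - 1) - (((s : ℕ) + j) % m) with hlev
  set e : ℕ → ℤ := fun j => if j < m then d (lev j) else 0 with he
  set a : ℕ → ℤ := fun j =>
    ((s : ℕ) : ℤ) + ∑ i ∈ Finset.range j, (1 + e i * m * q ^ (lev i)) with ha
  have haj : ∀ j, a j = ((s : ℕ) : ℤ) + j + m * ∑ i ∈ Finset.range j, e i * q ^ (lev i) := by
    intro j
    rw [ha]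
    simp only
    rw [Finset.sum_add_distrib, Finset.sum_const, Finset.card_range, Finset.mul_sum]
    have hc : ∑ i ∈ Finset.range j, e i * (m:ℤ) * q ^ lev i
        = ∑ i ∈ Finset.range j, (m:ℤ) * (e i * q ^ lev i) :=
      Finset.sum_congr rfl fun i _ => by ring
    rw [hc]
    ring
  have hamod : ∀ j, 0 ≤ a j % (absN k m : ℤ) ∧ a j % (absN k m : ℤ) < (absN k m : ℤ) :=
    fun j => ⟨Int.emod_nonneg _ (by omega), Int.emod_lt_of_pos _ hnZ0⟩
  set w : ℕ → Fin (absN k m) := fun j => ⟨(a j % (absN k m : ℤ)).toNat, by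
    have h := hamod j; omega⟩ with hw
  have hwval : ∀ j, ((w j : ℕ) : ℤ) = a j % (absN k m : ℤ) := by
    intro j
    simp only [hw]
    exact Int.toNat_of_nonneg (hamod j).1
  -- mod m of nodes
  have hwm : ∀ j, ((w j : ℕ)) % m = ((s : ℕ) + j) % m := by
    intro j
    have h1 : ((w j : ℕ) : ℤ) % m = a j % m := by
      rw [hwval j, Int.emod_emod_of_dvd _ hmn]
    have h2 : a j % m = (((s : ℕ) : ℤ) + j) % m := by
      rw [haj j, Int.add_mul_emod_self_left]
    have h3 : (((w j : ℕ)) % m : ℤ) = ((((s:ℕ) + j) % m : ℕ) : ℤ) := by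
      push_cast
      rw [h1, h2]
    exact_mod_cast h3
  have hlevw : ∀ j, absLevel m (w j) = lev j := by
    intro j
    rw [absLevel, hwm j]
  refine ⟨L, hLle, w, ?_, ?_, ?_⟩
  · -- w 0 = s
    apply Fin.ext
    have h0 : a 0 = ((s : ℕ) : ℤ) := by rw [ha]; simp
    have h1 : ((w 0 : ℕ) : ℤ) = ((s : ℕ) : ℤ) := by
      rw [hwval 0, h0, Int.emod_eq_of_lt (by positivity) (by exact_mod_cast s.isLt)]
    exact_mod_cast h1
  · -- w L = t
    apply Fin.ext
    have hSL : ∑ i ∈ Finset.range L, e i * q ^ (lev i)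
        = ∑ i ∈ Finset.range m, e i * q ^ (lev i) := by
      symm
      apply Finset.sum_subset
      · exact Finset.range_subset_range.2 (by omega)
      · intro x _ hx
        simp only [Finset.mem_range, not_lt] at hx
        simp [he, Nat.not_lt.2 hx]
    have hSm : ∑ i ∈ Finset.range m, e i * q ^ (lev i)
        = ∑ ℓ ∈ Finset.range m, d ℓ * q ^ ℓ := by
      have hc : ∀ i ∈ Finset.range m, e i * q ^ (lev i) = d (lev i) * q ^ (lev i) := by
        intro i hi
        simp only [Finset.mem_range] at hi
        simp [he, hi]
      rw [Finset.sum_congr rfl hc]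
      exact level_sum m (s : ℕ) hm (fun ℓ => d ℓ * q ^ ℓ)
    obtain ⟨E, hE⟩ := hdvd
    have haL : a L = ((t : ℕ) : ℤ) + (absN k m : ℤ) * E := by
      rw [haj L, hSL, hSm, hnz]
      linear_combination (m : ℤ) * hE - hD
    have h1 : ((w L : ℕ) : ℤ) = ((t : ℕ) : ℤ) := by
      rw [hwval L, haL, Int.add_mul_emod_self_left,
        Int.emod_eq_of_lt (by positivity) (by exact_mod_cast t.isLt)]
    exact_mod_cast h1
  · -- edges
    intro j hj
    refine ⟨e j, ?_, ?_, ?_⟩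
    · simp only [he]
      split
      · exact (hdbd _).1
      · simp
    · simp only [he]
      split
      · exact (hdbd _).2
      · positivity
    · rw [hlevw j, hwval (j+1), hwval j, ← hq]
      rw [Int.emod_add_emod]
      congr 1
      rw [ha]
      simp only
      rw [Finset.sum_range_succ]
      ring
end

section
/- In the network B_absolute(k,m), the average over all ordered pairs (s,t) of nodes of the length of the shortest directed path from s to t is at most 1.5m. -/
namespace AbsProof

variable {k m : ℕ}

lemma absN_pos (hm : 1 ≤ m) : 0 < absN k m := by
  unfold absN; positivity

/-- The node with label `x mod n`. -/
def nd (k m : ℕ) (hm : 1 ≤ m) (x : ℤ) : Fin (absN k m) :=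
  ⟨(x % ((absN k m : ℕ) : ℤ)).toNat, by
    have hn : (0 : ℤ) < ((absN k m : ℕ) : ℤ) := by exact_mod_cast absN_pos hm
    have h1 : 0 ≤ x % ((absN k m : ℕ) : ℤ) := Int.emod_nonneg x (by omega)
    have h2 : x % ((absN k m : ℕ) : ℤ) < ((absN k m : ℕ) : ℤ) := Int.emod_lt_of_pos x hn
    omega⟩

lemma nd_coe (hm : 1 ≤ m) (x : ℤ) :
    (((nd k m hm x : Fin (absN k m)) : ℕ) : ℤ) = x % ((absN k m : ℕ) : ℤ) := by
  have hn : (0 : ℤ) < ((absN k m : ℕ) : ℤ) := by exact_mod_cast absN_pos hm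
  have h1 : 0 ≤ x % ((absN k m : ℕ) : ℤ) := Int.emod_nonneg x (by omega)
  simp [nd, Int.toNat_of_nonneg h1]

lemma nd_congr (hm : 1 ≤ m) {x y : ℤ}
    (h : x % ((absN k m : ℕ) : ℤ) = y % ((absN k m : ℕ) : ℤ)) :
    nd k m hm x = nd k m hm y := by
  apply Fin.ext
  simp only [nd, h]

lemma nd_self (hm : 1 ≤ m) (u : Fin (absN k m)) : nd k m hm ((u : ℕ) : ℤ) = u := by
  apply Fin.ext
  have h : (((u : ℕ) : ℤ)) % ((absN k m : ℕ) : ℤ) = ((u : ℕ) : ℤ) := by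
    apply Int.emod_eq_of_lt (by positivity)
    exact_mod_cast u.isLt
  simp [nd, h]

lemma nd_mod (hm : 1 ≤ m) (x : ℤ) :
    (((nd k m hm x : Fin (absN k m)) : ℕ) : ℤ) % ((absN k m : ℕ) : ℤ)
      = x % ((absN k m : ℕ) : ℤ) := by
  rw [nd_coe hm, Int.emod_emod_of_dvd _ dvd_rfl]

/-- Reachability in exactly `L` steps. -/
def Reach (k m : ℕ) (s t : Fin (absN k m)) (L : ℕ) : Prop :=
  ∃ w : ℕ → Fin (absN k m), w 0 = s ∧ w L = t ∧ ∀ j < L, absEdge k m (w j) (w (j + 1))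

lemma reach_zero (s : Fin (absN k m)) : Reach k m s s 0 :=
  ⟨fun _ => s, rfl, rfl, fun j hj => absurd hj (by omega)⟩

lemma reach_single {u v : Fin (absN k m)} (h : absEdge k m u v) : Reach k m u v 1 := by
  refine ⟨fun j => if j = 0 then u else v, by simp, by simp, ?_⟩
  intro j hj
  have : j = 0 := by omega
  simpa [this] using h

lemma reach_trans {s u t : Fin (absN k m)} {a b : ℕ}
    (h1 : Reach k m s u a) (h2 : Reach k m u t b) : Reach k m s t (a + b) := by
  obtain ⟨w1, hw10, hw1a, hw1e⟩ := h1
  obtain ⟨w2, hw20, hw2b, hw2e⟩ := h2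
  refine ⟨fun j => if j < a then w1 j else w2 (j - a), ?_, ?_, ?_⟩
  · by_cases ha : 0 < a
    · simpa [ha] using hw10
    · have ha0 : a = 0 := by omega
      subst ha0
      simp only [lt_irrefl, if_false, Nat.sub_zero]
      rw [hw20, ← hw1a, hw10]
  · have : ¬ a + b < a := by omega
    simp only [this, if_false]
    simpa using hw2b
  · intro j hj
    by_cases hj2 : j < a
    · by_cases hja : j + 1 < a
      · simp only [if_pos hj2, if_pos hja]
        exact hw1e j hj2
      · have hja1 : j + 1 = a := by omega
        simp only [if_pos hj2, if_neg hja]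
        have h0 : j + 1 - a = 0 := by omega
        rw [h0, hw20, ← hw1a, ← hja1]
        exact hw1e j hj2
    · have hja : ¬ j + 1 < a := by omega
      simp only [if_neg hj2, if_neg hja]
      have hs : j + 1 - a = (j - a) + 1 := by omega
      rw [hs]
      exact hw2e (j - a) (by omega)

lemma edge_forward (hm : 1 ≤ m) (u : Fin (absN k m)) (i : ℤ) (h1 : -(k : ℤ) ≤ i)
    (h2 : i ≤ (k : ℤ)) :
    absEdge k m u
      (nd k m hm (((u : ℕ) : ℤ) + (1 + i * (m : ℤ) * (2 * (k : ℤ) + 1) ^ absLevel m u))) :=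
  Or.inl ⟨i, h1, h2, nd_coe hm _⟩

/-- `m` divides `n` (as integers). -/
lemma m_dvd_n : ((m : ℤ)) ∣ ((absN k m : ℕ) : ℤ) := by
  refine ⟨(2 * (k : ℤ) + 1) ^ m, ?_⟩
  unfold absN
  push_cast
  ring

/-- walk by trivial +1 steps -/
lemma reach_trivial (hm : 1 ≤ m) (u : Fin (absN k m)) (j : ℕ) :
    Reach k m u (nd k m hm (((u : ℕ) : ℤ) + j)) j := by
  induction j with
  | zero => simpa [nd_self hm u] using reach_zero u
  | succ j ih =>
    have hedge := edge_forward hm (nd k m hm (((u : ℕ) : ℤ) + j)) 0 (by omega) (by omega)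
    have heq : nd k m hm
        ((((nd k m hm (((u : ℕ) : ℤ) + j) : Fin (absN k m)) : ℕ) : ℤ) +
          (1 + 0 * (m : ℤ) * (2 * (k : ℤ) + 1) ^ absLevel m (nd k m hm (((u : ℕ) : ℤ) + j))))
        = nd k m hm (((u : ℕ) : ℤ) + (j + 1)) := by
      apply nd_congr hm
      rw [zero_mul, zero_mul, Int.add_emod, nd_mod hm, ← Int.add_emod]
      ring_nf
    rw [heq] at hedge
    have := reach_trans ih (reach_single hedge)
    simpa [Nat.add_comm] using this


lemma nd_shift (hm : 1 ≤ m) (x y : ℤ) :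
    nd k m hm ((((nd k m hm x : Fin (absN k m)) : ℕ) : ℤ) + y) = nd k m hm (x + y) := by
  apply nd_congr hm
  rw [Int.add_emod, nd_mod hm, ← Int.add_emod]

lemma nd_mod_m (hm : 1 ≤ m) (x : ℤ) :
    (((nd k m hm x : Fin (absN k m)) : ℕ) : ℤ) % (m : ℤ) = x % (m : ℤ) := by
  rw [← Int.emod_emod_of_dvd _ m_dvd_n, nd_coe hm, Int.emod_emod_of_dvd _ dvd_rfl,
    Int.emod_emod_of_dvd _ m_dvd_n]

lemma phase (hm : 1 ≤ m) :
    ∀ j : ℕ, ∀ u : Fin (absN k m), j + (u : ℕ) % m ≤ m → ∀ c : ℤ,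
      2 * |c| + 1 ≤ (2 * (k : ℤ) + 1) ^ j →
      Reach k m u
        (nd k m hm (((u : ℕ) : ℤ) + (j : ℕ) + (m : ℤ) * c *
          (2 * (k : ℤ) + 1) ^ (m - (u : ℕ) % m - j))) j := by
  intro j
  induction j with
  | zero =>
    intro u _ c hc
    rw [pow_zero] at hc
    have hc0 : c = 0 := by
      have h1 : |c| ≤ 0 := by linarith
      have h2 := abs_nonneg c
      exact abs_eq_zero.mp (le_antisymm h1 h2)
    have harg : ((u : ℕ) : ℤ) + ((0 : ℕ) : ℤ) + (m : ℤ) * c *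
        (2 * (k : ℤ) + 1) ^ (m - (u : ℕ) % m - 0) = ((u : ℕ) : ℤ) := by
      rw [hc0]; push_cast; ring
    rw [harg, nd_self hm u]
    exact reach_zero u
  | succ j ih =>
    intro u hu c hc
    have hum : (u : ℕ) % m < m := Nat.mod_lt _ hm
    set N : ℤ := (2 * (k : ℤ) + 1) ^ j with hNdef
    have hNodd : Odd N := Odd.pow ⟨(k : ℤ), by ring⟩
    obtain ⟨K, hK⟩ := hNodd
    have hNpos : (0 : ℤ) < N := by positivity
    have hK0 : (0 : ℤ) ≤ K := by omega
    set d : ℤ := (c + K) / N with hddef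
    set r : ℤ := (c + K) % N with hrdef
    have hdr : N * d + r = c + K := Int.mul_ediv_add_emod _ _
    have hr0 : (0 : ℤ) ≤ r := Int.emod_nonneg _ (by omega)
    have hrN : r < N := Int.emod_lt_of_pos _ hNpos
    set c' : ℤ := r - K with hc'def
    have hcc : c = N * d + c' := by omega
    have hc'abs : |c'| ≤ K := abs_le.mpr ⟨by omega, by omega⟩
    have hc'b : 2 * |c'| + 1 ≤ N := by linarith
    rw [pow_succ] at hc
    have hcabs1 : c ≤ |c| := le_abs_self c
    have hcabs2 : -|c| ≤ c := neg_abs_le c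
    have hdk1 : d ≤ (k : ℤ) := by
      by_contra hcon
      push_neg at hcon
      have h2 : N * ((k : ℤ) + 1) ≤ N * d :=
        mul_le_mul_of_nonneg_left (by omega) (le_of_lt hNpos)
      have e2 : N * ((k : ℤ) + 1) = N * (k : ℤ) + N := by ring
      have e3 : N * (2 * (k : ℤ) + 1) = 2 * (N * (k : ℤ)) + N := by ring
      linarith
    have hdk2 : -(k : ℤ) ≤ d := by
      by_contra hcon
      push_neg at hcon
      have h2 : N * d ≤ N * (-(k : ℤ) - 1) :=
        mul_le_mul_of_nonneg_left (by omega) (le_of_lt hNpos)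
      have e2 : N * (-(k : ℤ) - 1) = -(N * (k : ℤ)) - N := by ring
      have e3 : N * (2 * (k : ℤ) + 1) = 2 * (N * (k : ℤ)) + N := by ring
      linarith
    set E : ℕ := m - (u : ℕ) % m - (j + 1) with hEdef
    have hlev : absLevel m u = E + j := by
      unfold absLevel; omega
    have hedge := edge_forward hm u d hdk2 hdk1
    rw [hlev] at hedge
    set v : Fin (absN k m) :=
      nd k m hm (((u : ℕ) : ℤ) + (1 + d * (m : ℤ) * (2 * (k : ℤ) + 1) ^ (E + j))) with hvdef
    by_cases hcase : (u : ℕ) % m + 1 < m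
    · -- no wrap-around
      have hm2 : 2 ≤ m := by omega
      have hvm : (v : ℕ) % m = (u : ℕ) % m + 1 := by
        have h1 : (((v : ℕ) : ℤ)) % (m : ℤ) =
            (((u : ℕ) : ℤ) + (1 + d * (m : ℤ) * (2 * (k : ℤ) + 1) ^ (E + j))) % (m : ℤ) :=
          nd_mod_m hm _
        have h2 : ((u : ℕ) : ℤ) + (1 + d * (m : ℤ) * (2 * (k : ℤ) + 1) ^ (E + j)) =
            (((u : ℕ) : ℤ) + 1) + (m : ℤ) * (d * (2 * (k : ℤ) + 1) ^ (E + j)) := by ring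
        rw [h2, Int.add_mul_emod_self_left] at h1
        have h3 : ((v : ℕ) % m : ℤ) = (((u : ℕ) + 1) % m : ℤ) := by
          push_cast
          exact h1
        have h4 : ((v : ℕ)) % m = ((u : ℕ) + 1) % m := by exact_mod_cast h3
        rw [h4, Nat.add_mod, Nat.mod_eq_of_lt (show 1 < m by omega),
          Nat.mod_eq_of_lt hcase]
      have hvcond : j + (v : ℕ) % m ≤ m := by omega
      have hIH := ih v hvcond c' hc'b
      have hexp : m - (v : ℕ) % m - j = E := by omega
      rw [hexp] at hIH
      have hX : nd k m hm (((v : ℕ) : ℤ) + (j : ℕ) + (m : ℤ) * c' *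
            (2 * (k : ℤ) + 1) ^ E) =
          nd k m hm (((u : ℕ) : ℤ) + ((j + 1 : ℕ) : ℤ) + (m : ℤ) * c *
            (2 * (k : ℤ) + 1) ^ E) := by
        have h5 : ((v : ℕ) : ℤ) + (j : ℕ) + (m : ℤ) * c' * (2 * (k : ℤ) + 1) ^ E =
            ((v : ℕ) : ℤ) + ((j : ℕ) + (m : ℤ) * c' * (2 * (k : ℤ) + 1) ^ E) := by ring
        rw [h5, hvdef, nd_shift hm]
        apply congrArg
        rw [hcc, pow_add]
        push_cast
        ring
      rw [hX] at hIH
      have := reach_trans (reach_single hedge) hIH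
      have hlen : 1 + j = j + 1 := by omega
      rw [hlen] at this
      convert this using 2
    · -- wrap-around: forces j = 0
      have hu1 : (u : ℕ) % m = m - 1 := by omega
      have hj0 : j = 0 := by omega
      subst hj0
      have hN1 : N = 1 := by rw [hNdef, pow_zero]
      have hc'0 : c' = 0 := by
        have habs : |c'| = 0 := le_antisymm (by omega) (abs_nonneg c')
        exact abs_eq_zero.mp habs
      have hcd : c = d := by
        rw [hN1, one_mul] at hcc
        omega
      have hT : nd k m hm (((u : ℕ) : ℤ) + (1 + d * (m : ℤ) *
            (2 * (k : ℤ) + 1) ^ (E + 0))) =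
          nd k m hm (((u : ℕ) : ℤ) + ((0 + 1 : ℕ) : ℤ) + (m : ℤ) * c *
            (2 * (k : ℤ) + 1) ^ E) := by
        apply congrArg
        rw [hcd]
        push_cast
        ring
      rw [hvdef.trans hT] at hedge
      exact reach_single hedge


lemma castN : ((absN k m : ℕ) : ℤ) = (2 * (k : ℤ) + 1) ^ m * m := by
  unfold absN; push_cast; ring

/-- In exactly `m` steps one can add `m + m*c` (mod `n`) for any integer `c`. -/
lemma sweep (hm : 1 ≤ m) (u : Fin (absN k m)) (c : ℤ) :
    Reach k m u (nd k m hm (((u : ℕ) : ℤ) + (m : ℤ) + (m : ℤ) * c)) m := by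
  set j₁ : ℕ := m - (u : ℕ) % m with hj1def
  set j₂ : ℕ := (u : ℕ) % m with hj2def
  have hum : (u : ℕ) % m < m := Nat.mod_lt _ hm
  have hj12 : j₁ + j₂ = m := by omega
  -- balanced splitting of c
  set N₁ : ℤ := (2 * (k : ℤ) + 1) ^ j₁ with hN1def
  set N₂ : ℤ := (2 * (k : ℤ) + 1) ^ j₂ with hN2def
  obtain ⟨K₁, hK1⟩ : Odd N₁ := Odd.pow ⟨(k : ℤ), by ring⟩
  obtain ⟨K₂, hK2⟩ : Odd N₂ := Odd.pow ⟨(k : ℤ), by ring⟩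
  have hN1pos : (0 : ℤ) < N₁ := by positivity
  have hN2pos : (0 : ℤ) < N₂ := by positivity
  set q : ℤ := (c + K₁) / N₁ with hqdef
  set r₁ : ℤ := (c + K₁) % N₁ with hr1def
  have hdr1 : N₁ * q + r₁ = c + K₁ := Int.mul_ediv_add_emod _ _
  have hr10 : (0 : ℤ) ≤ r₁ := Int.emod_nonneg _ (by omega)
  have hr1N : r₁ < N₁ := Int.emod_lt_of_pos _ hN1pos
  set c₁ : ℤ := r₁ - K₁ with hc1def
  have hc1abs : |c₁| ≤ K₁ := abs_le.mpr ⟨by omega, by omega⟩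
  have hc1b : 2 * |c₁| + 1 ≤ N₁ := by linarith
  set p : ℤ := (q + K₂) / N₂ with hpdef
  set r₂ : ℤ := (q + K₂) % N₂ with hr2def
  have hdr2 : N₂ * p + r₂ = q + K₂ := Int.mul_ediv_add_emod _ _
  have hr20 : (0 : ℤ) ≤ r₂ := Int.emod_nonneg _ (by omega)
  have hr2N : r₂ < N₂ := Int.emod_lt_of_pos _ hN2pos
  set c₂ : ℤ := r₂ - K₂ with hc2def
  have hc2abs : |c₂| ≤ K₂ := abs_le.mpr ⟨by omega, by omega⟩
  have hc2b : 2 * |c₂| + 1 ≤ N₂ := by linarith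
  -- phase 1
  have hW := phase hm j₁ u (by omega) c₁ hc1b
  have hexp1 : m - (u : ℕ) % m - j₁ = 0 := by omega
  rw [hexp1, pow_zero, mul_one] at hW
  set W : Fin (absN k m) := nd k m hm (((u : ℕ) : ℤ) + (j₁ : ℕ) + (m : ℤ) * c₁) with hWdef
  -- W has residue 0 mod m
  have hWm : (W : ℕ) % m = 0 := by
    have h1 : (((W : ℕ) : ℤ)) % (m : ℤ) =
        (((u : ℕ) : ℤ) + ((j₁ : ℕ) : ℤ) + (m : ℤ) * c₁) % (m : ℤ) := nd_mod_m hm _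
    have h2 : ((u : ℕ) : ℤ) + ((j₁ : ℕ) : ℤ) + (m : ℤ) * c₁ =
        (((u : ℕ) : ℤ) + ((j₁ : ℕ) : ℤ)) + (m : ℤ) * c₁ := by ring
    rw [h2, Int.add_mul_emod_self_left] at h1
    have h3 : ((W : ℕ) % m : ℤ) = (((u : ℕ) + j₁) % m : ℤ) := by push_cast; exact h1
    have h4 : (W : ℕ) % m = ((u : ℕ) + j₁) % m := by exact_mod_cast h3
    have hdm := Nat.div_add_mod (u : ℕ) m
    have h5 : (u : ℕ) + j₁ = m * ((u : ℕ) / m + 1) := by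
      rw [Nat.mul_add, Nat.mul_one]
      omega
    rw [h4, h5, Nat.mul_mod_right]
  -- phase 2
  have hW2 := phase hm j₂ W (by omega) c₂ hc2b
  have hexp2 : m - (W : ℕ) % m - j₂ = j₁ := by omega
  rw [hexp2] at hW2
  -- combine
  have hcomb := reach_trans hW hW2
  rw [hj12] at hcomb
  have hX : nd k m hm (((W : ℕ) : ℤ) + ((j₂ : ℕ) : ℤ) + (m : ℤ) * c₂ *
        (2 * (k : ℤ) + 1) ^ j₁) =
      nd k m hm (((u : ℕ) : ℤ) + (m : ℤ) + (m : ℤ) * c) := by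
    have h6 : ((W : ℕ) : ℤ) + ((j₂ : ℕ) : ℤ) + (m : ℤ) * c₂ * (2 * (k : ℤ) + 1) ^ j₁ =
        ((W : ℕ) : ℤ) + (((j₂ : ℕ) : ℤ) + (m : ℤ) * c₂ * (2 * (k : ℤ) + 1) ^ j₁) := by
      ring
    rw [h6, hWdef, nd_shift hm]
    apply nd_congr hm
    have hpow : (2 * (k : ℤ) + 1) ^ m = N₁ * N₂ := by
      rw [← hj12, pow_add]
    have hj12' : ((j₁ : ℕ) : ℤ) + ((j₂ : ℕ) : ℤ) = (m : ℤ) := by exact_mod_cast hj12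
    have harg : ((u : ℕ) : ℤ) + ((j₁ : ℕ) : ℤ) + (m : ℤ) * c₁ +
          (((j₂ : ℕ) : ℤ) + (m : ℤ) * c₂ * (2 * (k : ℤ) + 1) ^ j₁) =
        (((u : ℕ) : ℤ) + (m : ℤ) + (m : ℤ) * c) + ((absN k m : ℕ) : ℤ) * (-p) := by
      rw [castN]
      have hc : c = N₁ * (N₂ * p + c₂) + c₁ := by
        have hq : q = N₂ * p + c₂ := by omega
        rw [← hq]
        omega
      rw [hc, hpow, ← hj12']
      ring
    rw [harg, Int.add_mul_emod_self_left]
  rw [hX] at hcomb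
  exact hcomb


/-- Explicit route: `s` reaches `t` in exactly `m + ((t - s) mod m)` steps. -/
lemma route (hm : 1 ≤ m) (s t : Fin (absN k m)) :
    Reach k m s t (m + ((t : ℕ) + (m - (s : ℕ) % m)) % m) := by
  have hum : (s : ℕ) % m < m := Nat.mod_lt _ hm
  set a : ℕ := m - (s : ℕ) % m with hadef
  set ρ : ℕ := ((t : ℕ) + a) % m with hrhodef
  have h1 := reach_trivial hm s ρ
  set v : Fin (absN k m) := nd k m hm (((s : ℕ) : ℤ) + (ρ : ℕ)) with hvdef
  set c : ℤ := ((((t : ℕ) + a) / m : ℕ) : ℤ) - (((s : ℕ) / m : ℕ) : ℤ) - 2 with hcdef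
  have h2 := sweep hm v c
  have hX : nd k m hm (((v : ℕ) : ℤ) + (m : ℤ) + (m : ℤ) * c) = t := by
    have h6 : ((v : ℕ) : ℤ) + (m : ℤ) + (m : ℤ) * c =
        ((v : ℕ) : ℤ) + ((m : ℤ) + (m : ℤ) * c) := by ring
    rw [h6, hvdef, nd_shift hm]
    have hQ := Nat.div_add_mod ((t : ℕ) + a) m
    have hS := Nat.div_add_mod (s : ℕ) m
    have hQ' : (m : ℤ) * ((((t : ℕ) + a) / m : ℕ) : ℤ) + (ρ : ℤ) =
        ((t : ℕ) : ℤ) + (a : ℤ) := by exact_mod_cast hQ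
    have hS' : (m : ℤ) * (((s : ℕ) / m : ℕ) : ℤ) + (((s : ℕ) % m : ℕ) : ℤ) =
        ((s : ℕ) : ℤ) := by exact_mod_cast hS
    have ha' : (a : ℤ) + (((s : ℕ) % m : ℕ) : ℤ) = (m : ℤ) := by
      have : a + (s : ℕ) % m = m := by omega
      exact_mod_cast this
    have harg : ((s : ℕ) : ℤ) + (ρ : ℕ) + ((m : ℤ) + (m : ℤ) * c) = ((t : ℕ) : ℤ) := by
      rw [hcdef]
      linear_combination hQ' - hS' + ha'
    rw [harg, nd_self hm t]
  rw [hX] at h2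
  have h3 := reach_trans h1 h2
  rwa [Nat.add_comm] at h3

lemma mod_cancel (hm : 1 ≤ m) {x y r : ℕ} (hr : r < m) (h : (x + y) % m = 0) :
    ((r + x) % m + y) % m = r := by
  have h1 : ((r + x) % m + y) % m = (r + (x + y)) % m := by
    rw [Nat.mod_add_mod, add_assoc]
  rw [h1, Nat.add_mod, h, Nat.add_zero, Nat.mod_eq_of_lt hr, Nat.mod_eq_of_lt hr]

lemma add_compl_mod (hm : 1 ≤ m) (a : ℕ) : (a + (m - a % m)) % m = 0 := by
  have hd := Nat.div_add_mod a m
  have hlt : a % m < m := Nat.mod_lt _ hm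
  have h1 : a + (m - a % m) = m * (a / m + 1) := by
    rw [Nat.mul_add, Nat.mul_one]
    omega
  rw [h1, Nat.mul_mod_right]

lemma sum_rotate (hm : 1 ≤ m) (a : ℕ) :
    ∑ r ∈ Finset.range m, (r + a) % m = ∑ r ∈ Finset.range m, r := by
  apply Finset.sum_nbij' (i := fun r => (r + a) % m) (j := fun r => (r + (m - a % m)) % m)
  · intro x hx
    exact Finset.mem_range.mpr (Nat.mod_lt _ hm)
  · intro x hx
    exact Finset.mem_range.mpr (Nat.mod_lt _ hm)
  · intro x hx
    exact mod_cancel hm (Finset.mem_range.mp hx) (add_compl_mod hm a)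
  · intro x hx
    refine mod_cancel hm (Finset.mem_range.mp hx) ?_
    rw [Nat.add_comm]
    exact add_compl_mod hm a
  · intro x hx
    rfl

lemma sum_blocks (a : ℕ) (cc : ℕ) :
    ∑ x ∈ Finset.range (cc * m), (x + a) % m =
      cc * ∑ r ∈ Finset.range m, (r + a) % m := by
  induction cc with
  | zero => simp
  | succ cc ih =>
    rw [Nat.succ_mul, Finset.sum_range_add, ih, Nat.succ_mul]
    congr 1
    apply Finset.sum_congr rfl
    intro x _
    have h1 : cc * m + x + a = x + a + m * cc := by ring
    rw [h1, Nat.add_mul_mod_self_left]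

end AbsProof

/-- In `B_absolute(k, m)`, the average over all ordered pairs `(s, t)` of the length of
the shortest directed path from `s` to `t` is at most `1.5 m`. -/
theorem absolute_average_shortest_path (k m : ℕ) (hk : 1 ≤ k) (hm : 1 ≤ m) :
    (∑ s : Fin (absN k m), ∑ t : Fin (absN k m),
        ((sInf {L : ℕ | ∃ w : ℕ → Fin (absN k m),
          w 0 = s ∧ w L = t ∧ ∀ j < L, absEdge k m (w j) (w (j + 1))} : ℕ) : ℝ)) /
      ((absN k m : ℕ) : ℝ) ^ 2 ≤ (3 / 2 : ℝ) * m := by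
  have hn : 0 < absN k m := AbsProof.absN_pos hm
  have hD : ∀ s t : Fin (absN k m),
      sInf {L : ℕ | ∃ w : ℕ → Fin (absN k m),
          w 0 = s ∧ w L = t ∧ ∀ j < L, absEdge k m (w j) (w (j + 1))} ≤
        m + ((t : ℕ) + (m - (s : ℕ) % m)) % m :=
    fun s t => Nat.sInf_le (AbsProof.route hm s t)
  set T : ℕ := ∑ r ∈ Finset.range m, r with hTdef
  have hsum1 : ∀ s : Fin (absN k m),
      ∑ t : Fin (absN k m), (m + ((t : ℕ) + (m - (s : ℕ) % m)) % m)
        = absN k m * m + (2 * k + 1) ^ m * T := by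
    intro s
    rw [Finset.sum_add_distrib, Finset.sum_const, Finset.card_univ, Fintype.card_fin,
      smul_eq_mul]
    congr 1
    rw [Fin.sum_univ_eq_sum_range (fun x => (x + (m - (s : ℕ) % m)) % m) (absN k m)]
    have hb := AbsProof.sum_blocks (m := m) (m - (s : ℕ) % m) ((2 * k + 1) ^ m)
    rw [AbsProof.sum_rotate hm] at hb
    exact hb
  have hle : (∑ s : Fin (absN k m), ∑ t : Fin (absN k m),
        sInf {L : ℕ | ∃ w : ℕ → Fin (absN k m),
          w 0 = s ∧ w L = t ∧ ∀ j < L, absEdge k m (w j) (w (j + 1))}) ≤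
      absN k m * (absN k m * m + (2 * k + 1) ^ m * T) := by
    calc (∑ s : Fin (absN k m), ∑ t : Fin (absN k m),
          sInf {L : ℕ | ∃ w : ℕ → Fin (absN k m),
            w 0 = s ∧ w L = t ∧ ∀ j < L, absEdge k m (w j) (w (j + 1))}) ≤
        ∑ s : Fin (absN k m), ∑ t : Fin (absN k m),
          (m + ((t : ℕ) + (m - (s : ℕ) % m)) % m) :=
        Finset.sum_le_sum (fun s _ => Finset.sum_le_sum (fun t _ => hD s t))
      _ = ∑ _s : Fin (absN k m), (absN k m * m + (2 * k + 1) ^ m * T) :=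
        Finset.sum_congr rfl (fun s _ => hsum1 s)
      _ = absN k m * (absN k m * m + (2 * k + 1) ^ m * T) := by
        rw [Finset.sum_const, Finset.card_univ, Fintype.card_fin, smul_eq_mul]
  have hT2' : T * 2 ≤ m * m := by
    rw [hTdef, Finset.sum_range_id_mul_two]
    exact Nat.mul_le_mul_left m (Nat.sub_le m 1)
  have hcc : (2 * k + 1) ^ m * m = absN k m := rfl
  have h7 : absN k m * ((2 * k + 1) ^ m * (T * 2)) ≤
      absN k m * ((2 * k + 1) ^ m * (m * m)) :=
    Nat.mul_le_mul_left (absN k m) (Nat.mul_le_mul_left ((2 * k + 1) ^ m) hT2')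
  have h8 : absN k m * ((2 * k + 1) ^ m * (m * m)) = m * (absN k m * absN k m) := by
    rw [show (2 * k + 1) ^ m * (m * m) = ((2 * k + 1) ^ m * m) * m from by ring, hcc]
    ring
  have key : (∑ s : Fin (absN k m), ∑ t : Fin (absN k m),
        sInf {L : ℕ | ∃ w : ℕ → Fin (absN k m),
          w 0 = s ∧ w L = t ∧ ∀ j < L, absEdge k m (w j) (w (j + 1))}) * 2 ≤
      3 * m * (absN k m * absN k m) := by
    calc (∑ s : Fin (absN k m), ∑ t : Fin (absN k m),
          sInf {L : ℕ | ∃ w : ℕ → Fin (absN k m),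
            w 0 = s ∧ w L = t ∧ ∀ j < L, absEdge k m (w j) (w (j + 1))}) * 2 ≤
        (absN k m * (absN k m * m + (2 * k + 1) ^ m * T)) * 2 :=
        Nat.mul_le_mul_right 2 hle
      _ = (absN k m * (absN k m * m)) * 2 + absN k m * ((2 * k + 1) ^ m * (T * 2)) := by
        ring
      _ ≤ (absN k m * (absN k m * m)) * 2 + m * (absN k m * absN k m) := by
        exact Nat.add_le_add_left (h7.trans_eq h8) _
      _ = 3 * m * (absN k m * absN k m) := by ring
  have hpos : (0 : ℝ) < ((absN k m : ℕ) : ℝ) ^ 2 := by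
    have h0 : (0 : ℝ) < ((absN k m : ℕ) : ℝ) := by exact_mod_cast hn
    positivity
  rw [div_le_iff₀ hpos]
  have hcast : (∑ s : Fin (absN k m), ∑ t : Fin (absN k m),
      ((sInf {L : ℕ | ∃ w : ℕ → Fin (absN k m),
        w 0 = s ∧ w L = t ∧ ∀ j < L, absEdge k m (w j) (w (j + 1))} : ℕ) : ℝ)) =
      (((∑ s : Fin (absN k m), ∑ t : Fin (absN k m),
        sInf {L : ℕ | ∃ w : ℕ → Fin (absN k m),
          w 0 = s ∧ w L = t ∧ ∀ j < L, absEdge k m (w j) (w (j + 1))}) : ℕ) : ℝ) := by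
    push_cast
    rfl
  rw [hcast]
  have key' : (((∑ s : Fin (absN k m), ∑ t : Fin (absN k m),
      sInf {L : ℕ | ∃ w : ℕ → Fin (absN k m),
        w 0 = s ∧ w L = t ∧ ∀ j < L, absEdge k m (w j) (w (j + 1))}) : ℕ) : ℝ) * 2 ≤
      3 * (m : ℝ) * (((absN k m : ℕ) : ℝ) * ((absN k m : ℕ) : ℝ)) := by
    exact_mod_cast key
  rw [sq]
  linarith
end

section
/- In the network B_clockwise(κ,m), for every node u and every target node t with u ≠ t, every greedy next hop v of u (i.e., any neighbor of u minimizing δ_clockwise(·,t) among the neighbors of u) satisfies δ_clockwise(v,t) < δ_clockwise(u,t). Consequently, greedy routing with distance function δ_clockwise always reaches its target in a finite number of hops, at most δ_clockwise(s,t) hops from source s. -/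
lemma clockDelta_pos_aux (n a b : ℕ) (ha : a < n) (hb : b < n) (hab : a ≠ b) :
    0 < (b + n - a) % n := by
  rcases lt_or_gt_of_ne hab with hlt | hgt
  · -- a < b
    have e2 : b + n - a = (b - a) + n := by omega
    rw [e2, Nat.add_mod_right, Nat.mod_eq_of_lt (by omega)]
    omega
  · -- b < a
    rw [Nat.mod_eq_of_lt (by omega)]; omega

lemma clockDelta_succ_aux (n a b : ℕ) (ha : a < n) (hb : b < n) (hab : a ≠ b) :
    (b + n - (a + 1) % n) % n + 1 = (b + n - a) % n := by
  rcases eq_or_lt_of_le (Nat.succ_le_of_lt ha) with h1 | h1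
  · -- a + 1 = n
    have hv : (a + 1) % n = 0 := by rw [(by omega : a + 1 = n), Nat.mod_self]
    have hbn : b + 1 < n := by omega
    rw [hv, Nat.sub_zero, Nat.add_mod_right, Nat.mod_eq_of_lt hb]
    have e2 : b + n - a = b + 1 := by omega
    rw [e2, Nat.mod_eq_of_lt hbn]
  · -- a + 1 < n
    have hv : (a + 1) % n = a + 1 := Nat.mod_eq_of_lt h1
    rw [hv]
    rcases lt_or_gt_of_ne hab with hlt | hgt
    · -- a < b
      have e1 : b + n - (a + 1) = (b - (a + 1)) + n := by omega
      have e2 : b + n - a = (b - a) + n := by omega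
      rw [e1, e2, Nat.add_mod_right, Nat.add_mod_right,
        Nat.mod_eq_of_lt (by omega), Nat.mod_eq_of_lt (by omega)]
      omega
    · -- b < a
      rw [Nat.mod_eq_of_lt (by omega), Nat.mod_eq_of_lt (by omega)]; omega

/-- In `B_clockwise(κ, m)`: (1) every greedy next hop strictly decreases the clockwise
distance to the target; (2) consequently every greedy route from `s` reaches the target `t`
within `δ_clockwise(s, t)` hops. -/
theorem clockwise_greedy_progress (κ m : ℕ) (hκ : 1 ≤ κ) (hm : 1 ≤ m) :
    (∀ u v t : Fin (κ ^ m * m), u ≠ t → clockGreedyStep κ m t u v →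
      clockDelta (κ ^ m * m) v t < clockDelta (κ ^ m * m) u t) ∧
    (∀ s t : Fin (κ ^ m * m), ∀ w : ℕ → Fin (κ ^ m * m), w 0 = s →
      (∀ j, w j ≠ t → clockGreedyStep κ m t (w j) (w (j + 1))) →
      ∃ L ≤ clockDelta (κ ^ m * m) s t, w L = t) := by
  have hn0 : 0 < κ ^ m * m := Nat.mul_pos (pow_pos hκ m) hm
  have part1 : ∀ u v t : Fin (κ ^ m * m), u ≠ t → clockGreedyStep κ m t u v →
      clockDelta (κ ^ m * m) v t < clockDelta (κ ^ m * m) u t := by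
    intro u v t hune hstep
    have hval : (u : ℕ) ≠ (t : ℕ) := fun he => hune (Fin.ext he)
    -- the short-link neighbor
    set v0 : Fin (κ ^ m * m) := ⟨((u : ℕ) + 1) % (κ ^ m * m), Nat.mod_lt _ hn0⟩ with hv0
    have hedge : clockEdge κ m u v0 := ⟨0, hκ, by simp [hv0]⟩
    have hle := hstep.2 v0 hedge
    have hsucc : clockDelta (κ ^ m * m) v0 t + 1 = clockDelta (κ ^ m * m) u t := by
      simpa [clockDelta, hv0] using
        clockDelta_succ_aux (κ ^ m * m) (u : ℕ) (t : ℕ) u.2 t.2 hval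
    omega
  refine ⟨part1, ?_⟩
  intro s t w hw0 hsteps
  have key : ∀ k (w : ℕ → Fin (κ ^ m * m)),
      (∀ j, w j ≠ t → clockGreedyStep κ m t (w j) (w (j + 1))) →
      clockDelta (κ ^ m * m) (w 0) t ≤ k → ∃ L ≤ k, w L = t := by
    intro k
    induction k with
    | zero =>
      intro w hs hd
      refine ⟨0, le_refl _, ?_⟩
      by_contra hne
      have hval : ((w 0) : ℕ) ≠ (t : ℕ) := fun he => hne (Fin.ext he)
      have := clockDelta_pos_aux (κ ^ m * m) ((w 0) : ℕ) (t : ℕ) (w 0).2 t.2 hval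
      simp only [clockDelta] at hd
      omega
    | succ k ih =>
      intro w hs hd
      by_cases h : w 0 = t
      · exact ⟨0, Nat.zero_le _, h⟩
      · have hlt := part1 (w 0) (w 1) t h (hs 0 h)
        obtain ⟨L, hL, hwt⟩ := ih (fun j => w (j + 1)) (fun j hj => hs (j + 1) hj)
          (by show clockDelta (κ ^ m * m) (w 1) t ≤ k; omega)
        exact ⟨L + 1, by omega, hwt⟩
  obtain ⟨L, hL, hwt⟩ := key (clockDelta (κ ^ m * m) (w 0) t) w hsteps le_rfl
  rw [hw0] at hL
  exact ⟨L, hL, hwt⟩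
end

section
/- In the network B_clockwise(κ,m) with m ≥ 2, for every node u and every target t with 0 < δ_clockwise(u,t) < m, the unique neighbor of u minimizing δ_clockwise(·,t) is (u+1) mod n, the endpoint of u's short link. Consequently, if δ_clockwise(u,t) < m then the greedy route from u reaches t in exactly δ_clockwise(u,t) hops, each along a short link. -/
private lemma zmod_sub_val_of_le {n : ℕ} [NeZero n] (z : ZMod n) (x : ℕ) (hx : x ≤ z.val) :
    (z - (x : ZMod n)).val = z.val - x := by
  have hz : ((z.val : ℕ) : ZMod n) = z := ZMod.natCast_rightInverse z
  have h : z - (x : ZMod n) = ((z.val - x : ℕ) : ZMod n) := by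
    rw [Nat.cast_sub hx, hz]
  rw [h, ZMod.val_natCast, Nat.mod_eq_of_lt]
  exact lt_of_le_of_lt (Nat.sub_le _ _) (ZMod.val_lt z)

private lemma zmod_sub_val_of_gt {n : ℕ} [NeZero n] (z : ZMod n) (x : ℕ)
    (hx1 : z.val < x) (hx2 : x ≤ n) :
    (z - (x : ZMod n)).val = z.val + n - x := by
  have hz : ((z.val : ℕ) : ZMod n) = z := ZMod.natCast_rightInverse z
  have h1 : x ≤ z.val + n := le_trans hx2 (Nat.le_add_left _ _)
  have h : z - (x : ZMod n) = ((z.val + n - x : ℕ) : ZMod n) := by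
    rw [Nat.cast_sub h1, Nat.cast_add, ZMod.natCast_self, add_zero, hz]
  rw [h, ZMod.val_natCast, Nat.mod_eq_of_lt]
  omega

private lemma clockDelta_eq_val {n : ℕ} [NeZero n] (u t : Fin n) :
    clockDelta n u t = (((t : ℕ) : ZMod n) - ((u : ℕ) : ZMod n)).val := by
  have hu : (u : ℕ) ≤ (t : ℕ) + n := le_trans u.isLt.le (Nat.le_add_left _ _)
  unfold clockDelta
  rw [← ZMod.val_natCast (n := n) ((t : ℕ) + n - (u : ℕ))]
  congr 1
  rw [Nat.cast_sub hu, Nat.cast_add, ZMod.natCast_self, add_zero]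

private lemma clockDelta_self {n : ℕ} [NeZero n] (t : Fin n) : clockDelta n t t = 0 := by
  rw [clockDelta_eq_val, sub_self, ZMod.val_zero]

private lemma clockDelta_eq_zero {n : ℕ} [NeZero n] {u t : Fin n}
    (h : clockDelta n u t = 0) : u = t := by
  rw [clockDelta_eq_val] at h
  have := (ZMod.val_eq_zero _).mp h
  have h2 : ((t : ℕ) : ZMod n) = ((u : ℕ) : ZMod n) := sub_eq_zero.mp this
  have h3 := congrArg ZMod.val h2
  rw [ZMod.val_natCast_of_lt t.isLt, ZMod.val_natCast_of_lt u.isLt] at h3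
  exact (Fin.ext h3.symm)

section main

variable {κ m : ℕ}

private lemma npos (hκ : 1 ≤ κ) (hm : 2 ≤ m) : 0 < κ ^ m * m :=
  Nat.mul_pos (Nat.pow_pos hκ) (by omega)

/-- distance to target after following edge `i`. -/
private lemma delta_of_edge (hκ : 1 ≤ κ) (hm : 2 ≤ m)
    (u t v : Fin (κ ^ m * m)) (i : ℕ) (hi : i < κ)
    (hv : (v : ℕ) = ((u : ℕ) + (1 + i * m * κ ^ clockLevel m u)) % (κ ^ m * m))
    (hd0 : 0 < clockDelta (κ ^ m * m) u t) (hdm : clockDelta (κ ^ m * m) u t < m) :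
    (i = 0 → clockDelta (κ ^ m * m) v t = clockDelta (κ ^ m * m) u t - 1) ∧
    (i ≠ 0 → clockDelta (κ ^ m * m) u t ≤ clockDelta (κ ^ m * m) v t) := by
  haveI : NeZero (κ ^ m * m) := ⟨(npos hκ hm).ne'⟩
  set x := 1 + i * m * κ ^ clockLevel m u with hxdef
  set z := (((t : ℕ) : ZMod (κ ^ m * m)) - ((u : ℕ) : ZMod (κ ^ m * m))) with hz
  have hdz : clockDelta (κ ^ m * m) u t = z.val := clockDelta_eq_val u t
  have hvz : (((v : ℕ) : ZMod (κ ^ m * m)))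
      = ((u : ℕ) : ZMod (κ ^ m * m)) + (x : ℕ) := by
    rw [hv]
    rw [ZMod.natCast_mod]
    push_cast
    ring
  have hdv : clockDelta (κ ^ m * m) v t = (z - (x : ZMod (κ ^ m * m))).val := by
    rw [clockDelta_eq_val, hvz, hz]
    ring_nf
  -- bound x ≤ n
  have hκpos : 0 < κ := hκ
  have hKle : κ ^ clockLevel m u ≤ κ ^ (m - 1) :=
    Nat.pow_le_pow_right hκpos (by unfold clockLevel; omega)
  have hKpos : 1 ≤ κ ^ clockLevel m u := Nat.one_le_pow _ _ hκpos
  have hApos : 1 ≤ m * κ ^ (m - 1) :=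
    le_trans (by omega) (Nat.le_mul_of_pos_right m (Nat.one_le_pow _ _ hκpos))
  have hpow : κ ^ m = κ ^ (m - 1) * κ := by
    rw [← pow_succ]; congr 1; omega
  have hxn : x ≤ κ ^ m * m := by
    have h1 : i * m * κ ^ clockLevel m u ≤ (κ - 1) * (m * κ ^ (m - 1)) := by
      calc i * m * κ ^ clockLevel m u = i * (m * κ ^ clockLevel m u) := by ring
        _ ≤ (κ - 1) * (m * κ ^ (m - 1)) :=
          Nat.mul_le_mul (by omega) (Nat.mul_le_mul_left _ hKle)
    have hk1 : 1 + (κ - 1) = κ := by omega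
    calc x ≤ m * κ ^ (m - 1) + (κ - 1) * (m * κ ^ (m - 1)) := by
            rw [hxdef]; exact Nat.add_le_add hApos h1
      _ = (1 + (κ - 1)) * (m * κ ^ (m - 1)) := by rw [add_mul, one_mul]
      _ = κ * (m * κ ^ (m - 1)) := by rw [hk1]
      _ = κ ^ m * m := by rw [hpow]; ring
  constructor
  · intro h0
    have hx1 : x = 1 := by rw [hxdef, h0]; ring
    have h1 : 1 ≤ z.val := by omega
    rw [hdv, hx1, hdz]
    exact_mod_cast zmod_sub_val_of_le z 1 h1
  · intro h0
    have hxgt : z.val < x := by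
      have : m * 1 ≤ i * m * κ ^ clockLevel m u := by
        calc m * 1 ≤ (i * m) * κ ^ clockLevel m u :=
          Nat.mul_le_mul (Nat.le_mul_of_pos_left m (by omega)) hKpos
        _ = i * m * κ ^ clockLevel m u := by ring
      omega
    rw [hdv, hdz, zmod_sub_val_of_gt z x hxgt hxn]
    omega

/-- In `B_clockwise(κ, m)` with `m ≥ 2`: (1) if `0 < δ_clockwise(u, t) < m` then the unique
greedy next hop from `u` towards `t` is `(u + 1) mod n`, the endpoint of `u`'s short link;
(2) consequently, if `δ_clockwise(u, t) < m` then the greedy route from `u` reaches `t` in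
exactly `δ_clockwise(u, t)` hops, each along a short link. -/
theorem clockwise_greedy_short_links (κ m : ℕ) (hκ : 1 ≤ κ) (hm : 2 ≤ m) :
    (∀ u t v : Fin (κ ^ m * m),
      0 < clockDelta (κ ^ m * m) u t → clockDelta (κ ^ m * m) u t < m →
      (clockGreedyStep κ m t u v ↔ (v : ℕ) = ((u : ℕ) + 1) % (κ ^ m * m))) ∧
    (∀ u t : Fin (κ ^ m * m), ∀ w : ℕ → Fin (κ ^ m * m),
      clockDelta (κ ^ m * m) u t < m → w 0 = u →
      (∀ j, w j ≠ t → clockGreedyStep κ m t (w j) (w (j + 1))) →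
      w (clockDelta (κ ^ m * m) u t) = t ∧
        ∀ j < clockDelta (κ ^ m * m) u t,
          w j ≠ t ∧ (w (j + 1) : ℕ) = ((w j : ℕ) + 1) % (κ ^ m * m)) := by
  haveI : NeZero (κ ^ m * m) := ⟨(npos hκ hm).ne'⟩
  have hnpos : 0 < κ ^ m * m := npos hκ hm
  -- part 1
  have part1 : ∀ u t v : Fin (κ ^ m * m),
      0 < clockDelta (κ ^ m * m) u t → clockDelta (κ ^ m * m) u t < m →
      (clockGreedyStep κ m t u v ↔ (v : ℕ) = ((u : ℕ) + 1) % (κ ^ m * m)) := by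
    intro u t v hd0 hdm
    have hshortval : ((u : ℕ) + (1 + 0 * m * κ ^ clockLevel m u)) % (κ ^ m * m)
        = ((u : ℕ) + 1) % (κ ^ m * m) := by norm_num
    constructor
    · rintro ⟨⟨i, hi, hv⟩, hmin⟩
      by_cases h0 : i = 0
      · rw [hv, h0]
        norm_num
      · exfalso
        set short : Fin (κ ^ m * m) := ⟨((u : ℕ) + 1) % (κ ^ m * m), Nat.mod_lt _ hnpos⟩
          with hs
        have hsval : (short : ℕ)
            = ((u : ℕ) + (1 + 0 * m * κ ^ clockLevel m u)) % (κ ^ m * m) := by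
          rw [hs]; exact hshortval.symm
        have hse : clockEdge κ m u short := ⟨0, hκ, hsval⟩
        have h1 := (delta_of_edge hκ hm u t v i hi hv hd0 hdm).2 h0
        have h2 := (delta_of_edge hκ hm u t short 0 hκ hsval hd0 hdm).1 rfl
        have h3 := hmin short hse
        omega
    · intro hv
      have hvval : (v : ℕ)
          = ((u : ℕ) + (1 + 0 * m * κ ^ clockLevel m u)) % (κ ^ m * m) := by
        rw [hv]; exact hshortval.symm
      refine ⟨⟨0, hκ, hvval⟩, ?_⟩
      rintro v' ⟨i, hi, hv'⟩
      have h1 := (delta_of_edge hκ hm u t v 0 hκ hvval hd0 hdm).1 rfl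
      by_cases h0 : i = 0
      · have h2 := (delta_of_edge hκ hm u t v' i hi hv' hd0 hdm).1 h0
        omega
      · have h2 := (delta_of_edge hκ hm u t v' i hi hv' hd0 hdm).2 h0
        omega
  refine ⟨part1, ?_⟩
  -- part 2, by induction on the distance
  have claim : ∀ d : ℕ, ∀ u t : Fin (κ ^ m * m), ∀ w : ℕ → Fin (κ ^ m * m),
      clockDelta (κ ^ m * m) u t = d → d < m → w 0 = u →
      (∀ j, w j ≠ t → clockGreedyStep κ m t (w j) (w (j + 1))) →
      w d = t ∧ ∀ j < d, w j ≠ t ∧ (w (j + 1) : ℕ) = ((w j : ℕ) + 1) % (κ ^ m * m) := by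
    intro d
    induction d with
    | zero =>
      intro u t w hδ _ h0 _
      refine ⟨?_, by omega⟩
      rw [h0]
      exact clockDelta_eq_zero hδ
    | succ d ih =>
      intro u t w hδ hdm h0 hstep
      have hune : u ≠ t := by
        intro h
        rw [h, clockDelta_self] at hδ
        omega
      have hd0 : 0 < clockDelta (κ ^ m * m) u t := by omega
      have hstep0 : clockGreedyStep κ m t (w 0) (w 1) := hstep 0 (by rw [h0]; exact hune)
      rw [h0] at hstep0
      have hw1 : (w 1 : ℕ) = ((u : ℕ) + 1) % (κ ^ m * m) :=
        (part1 u t (w 1) hd0 (by omega)).mp hstep0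
      -- distance from w 1
      have hδ1 : clockDelta (κ ^ m * m) (w 1) t = d := by
        have hw1' : (w 1 : ℕ)
            = ((u : ℕ) + (1 + 0 * m * κ ^ clockLevel m u)) % (κ ^ m * m) := by
          rw [hw1]; norm_num
        have := (delta_of_edge hκ hm u t (w 1) 0 hκ hw1' hd0 (by omega)).1 rfl
        omega
      have hres := ih (w 1) t (fun j => w (j + 1)) hδ1 (by omega) rfl
        (fun j hj => hstep (j + 1) hj)
      refine ⟨hres.1, ?_⟩
      intro j hj
      cases j with
      | zero => exact ⟨by rw [h0]; exact hune, by rw [h0]; exact hw1⟩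
      | succ k => exact hres.2 k (by omega)
  intro u t w hdm h0 hstep
  exact claim (clockDelta (κ ^ m * m) u t) u t w rfl hdm h0 hstep

end main
end
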